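/- arXiv:math/0110210 — 3 statements merged into one kernel-verified Lean document; each statement's English description precedes it below -/
import Mathlib

section
/- Let G be a group acting on a tree T without inversions, let s = (u,v) be an oriented edge of T with stabiliser S = {g ∈ G : g·u = u and g·v = v}, and for each vertex b of T set Z_b = {g ∈ G : g·b ∈ Y_s}. Then: (1) S·Z_b = Z_b and Z_b is S-almost invariant, i.e. for every h ∈ G the symmetric difference of Z_b and Z_b·h is S-finite; and (2) for any two vertices b and b′ of T, the symmetric difference of Z_b and Z_{b′} is S-finite. -/
section Defs

variable {G : Type*} [Group G]

/-- `W` is `H`-finite: contained in finitely many left cosets `Hg` of `H` in `G`. -/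
def HFinite (H : Subgroup G) (W : Set G) : Prop :=
  ∃ F : Finset G, W ⊆ ⋃ g ∈ F, (· * g) '' (H : Set G)

/-- The left translate `gX` of a subset `X` of `G`. -/
def leftTr (g : G) (X : Set G) : Set G := (g * ·) '' X

/-- `X` is an `H`-almost invariant subset of `G`: `HX = X` and for every `g` the
symmetric difference of `X` and `Xg` is `H`-finite. -/
def AlmostInv (H : Subgroup G) (X : Set G) : Prop :=
  (∀ h ∈ H, leftTr h X = X) ∧ ∀ g : G, HFinite H (symmDiff X ((· * g) '' X))

/-- `X` is a nontrivial `H`-almost invariant subset of `G`. -/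
def NontrivialAI (H : Subgroup G) (X : Set G) : Prop :=
  AlmostInv H X ∧ ¬ HFinite H X ∧ ¬ HFinite H Xᶜ

/-- `Y` crosses the `H`-almost invariant set `X`: none of the four corner sets is `H`-finite. -/
def Crosses (H : Subgroup G) (X Y : Set G) : Prop :=
  ¬ HFinite H (X ∩ Y) ∧ ¬ HFinite H (X ∩ Yᶜ) ∧ ¬ HFinite H (Xᶜ ∩ Y) ∧ ¬ HFinite H (Xᶜ ∩ Yᶜ)

/-- The coboundary `∂Y` of `Y` with respect to a finite generating set `S`. -/
def bdry (S : Finset G) (Y : Set G) : Set G :=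
  {g : G | ∃ s ∈ (S : Set G) ∪ (S : Set G)⁻¹, (g ∈ Y) ≠ (g * s ∈ Y)}

/-- `Y` crosses the `H`-almost invariant set `X` strongly: neither `∂Y ∩ X` nor
`∂Y ∩ X*` is `H`-finite. -/
def CrossesStrongly (S : Finset G) (H : Subgroup G) (X Y : Set G) : Prop :=
  ¬ HFinite H (bdry S Y ∩ X) ∧ ¬ HFinite H (bdry S Y ∩ Xᶜ)

/-- Two subsets of `G` are nested if one of the four corner sets is empty. -/
def Nested (U V : Set G) : Prop :=
  U ∩ V = ∅ ∨ U ∩ Vᶜ = ∅ ∨ Uᶜ ∩ V = ∅ ∨ Uᶜ ∩ Vᶜ = ∅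

/-- The conjugate subgroup `gHg⁻¹`. -/
def conjSub (g : G) (H : Subgroup G) : Subgroup G :=
  Subgroup.map (MulAut.conj g).toMonoidHom H

/-- A subgroup is two-ended if it contains an infinite cyclic subgroup of finite index. -/
def TwoEnded (H : Subgroup G) : Prop :=
  ∃ z : G, z ∈ H ∧ ¬ IsOfFinOrder z ∧ (Subgroup.zpowers z).relIndex H ≠ 0

/-- `G` is one-ended: `G` is infinite and every almost invariant subset of `G` (over the
trivial group) is finite or cofinite. -/
def OneEnded (G : Type*) [Group G] : Prop :=
  Infinite G ∧ ∀ X : Set G,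
    (∀ g : G, (symmDiff X ((· * g) '' X)).Finite) → X.Finite ∨ Xᶜ.Finite

/-- `G` is finitely presented. -/
def FinitelyPresentedGroup (G : Type*) [Group G] : Prop :=
  ∃ (n : ℕ) (R : Finset (FreeGroup (Fin n))),
    Nonempty (G ≃* FreeGroup (Fin n) ⧸ Subgroup.normalClosure (R : Set (FreeGroup (Fin n))))

/-- `Q(H)`: the collection of subsets of `G` which are almost invariant over some subgroup
commensurable with `H`. -/
def QH (H : Subgroup G) : Set (Set G) :=
  {X : Set G | ∃ K : Subgroup G, Subgroup.Commensurable K H ∧ AlmostInv K X}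

/-- The Boolean algebra of subsets of `G` generated by a family `S` of subsets: the smallest
family containing `S` closed under complementation, finite intersections and finite unions. -/
inductive BoolGen (S : Set (Set G)) : Set G → Prop
  | basic {U : Set G} : U ∈ S → BoolGen S U
  | compl {U : Set G} : BoolGen S U → BoolGen S Uᶜ
  | inter {U V : Set G} : BoolGen S U → BoolGen S V → BoolGen S (U ∩ V)
  | union {U V : Set G} : BoolGen S U → BoolGen S V → BoolGen S (U ∪ V)

/-- A subgroup is virtually free abelian of rank `m` if it has a finite index subgroup
isomorphic to `ℤ^m`. -/
def VirtuallyFreeAbelian (H : Subgroup G) (m : ℕ) : Prop :=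
  ∃ K : Subgroup G, K ≤ H ∧ K.relIndex H ≠ 0 ∧ Nonempty (K ≃* Multiplicative (Fin m → ℤ))

/-- `X` is `n`-canonical with respect to abelian groups: no translate of `X` crosses a
nontrivial almost invariant set over a virtually free abelian subgroup of rank at most `n`. -/
def NCanonicalAb (n : ℕ) (X : Set G) : Prop :=
  ∀ (L : Subgroup G) (m : ℕ), m ≤ n → VirtuallyFreeAbelian L m →
    ∀ Z : Set G, AlmostInv L Z → ¬ HFinite L Z → ¬ HFinite L Zᶜ →
      ∀ g : G, ¬ Crosses L Z (leftTr g X)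

variable {ι : Type*}

/-- The set `E` of all translates of the sets `X i` and of their complements. -/
def Translates (X : ι → Set G) : Set (Set G) :=
  {U : Set G | ∃ (g : G) (i : ι), U = leftTr g (X i) ∨ U = (leftTr g (X i))ᶜ}

/-- `W` is small for the element `U` of `E`: `W` is finite over the group `gHᵢg⁻¹`
associated to `U`. -/
def SmallOver (H : ι → Subgroup G) (X : ι → Set G) (U W : Set G) : Prop :=
  ∃ (g : G) (i : ι), (U = leftTr g (X i) ∨ U = (leftTr g (X i))ᶜ) ∧
    HFinite (conjSub g (H i)) W

/-- The four corner sets `U^{(*)} ∩ V^{(*)}`, indexed by pairs of booleans. -/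
def corner (U V : Set G) (p : Bool × Bool) : Set G :=
  (cond p.1 U Uᶜ) ∩ (cond p.2 V Vᶜ)

/-- Condition (*): the family is in good position: whenever two of the four corner sets
of a pair of elements of `E` are small, one of the corner sets is empty. -/
def GoodPosition (H : ι → Subgroup G) (X : ι → Set G) : Prop :=
  ∀ U ∈ Translates X, ∀ V ∈ Translates X,
    ∀ p q : Bool × Bool, p ≠ q →
      SmallOver H X U (corner U V p) → SmallOver H X U (corner U V q) →
        ∃ r : Bool × Bool, corner U V r = ∅

/-- The relation `U ≤ V` on `E`: `U ∩ V*` is empty or is the only small corner set. -/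
def eLE (H : ι → Subgroup G) (X : ι → Set G) (U V : Set G) : Prop :=
  U ∩ Vᶜ = ∅ ∨
    (SmallOver H X U (U ∩ Vᶜ) ∧
      ∀ p : Bool × Bool, p ≠ (true, false) → ¬ SmallOver H X U (corner U V p))

/-- The relation `U < V` on `E`. -/
def eLT (H : ι → Subgroup G) (X : ι → Set G) (U V : Set G) : Prop :=
  eLE H X U V ∧ U ≠ V

/-- `V` crosses the element `U` of `E`: no corner set is small. -/
def CrossesE (H : ι → Subgroup G) (X : ι → Set G) (U V : Set G) : Prop :=
  ∀ p : Bool × Bool, ¬ SmallOver H X U (corner U V p)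

/-- `V` crosses the element `U` of `E` strongly. -/
def StronglyCrossesE (S : Finset G) (H : ι → Subgroup G) (X : ι → Set G) (U V : Set G) : Prop :=
  ∃ (g : G) (i : ι), (U = leftTr g (X i) ∨ U = (leftTr g (X i))ᶜ) ∧
    ¬ HFinite (conjSub g (H i)) (bdry S V ∩ U) ∧ ¬ HFinite (conjSub g (H i)) (bdry S V ∩ Uᶜ)

/-- The relation on `E` generating the cross-connected components of `Ē`: two elements are
related if they coincide, are complementary, or cross. -/
def ccRelSet (H : ι → Subgroup G) (X : ι → Set G) (U V : Set G) : Prop :=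
  U ∈ Translates X ∧ V ∈ Translates X ∧ (U = V ∨ U = Vᶜ ∨ CrossesE H X U V)

/-- `U` and `V` determine the same cross-connected component of `Ē`. -/
def SameCCC (H : ι → Subgroup G) (X : ι → Set G) (U V : Set G) : Prop :=
  Relation.EqvGen (ccRelSet H X) U V

/-- `V̄` lies between `Ū` and `W̄` in `Ē`: some representatives satisfy `u < v < w`. -/
def BetweenBar (H : ι → Subgroup G) (X : ι → Set G) (U V W : Set G) : Prop :=
  ∃ u v w : Set G, (u = U ∨ u = Uᶜ) ∧ (v = V ∨ v = Vᶜ) ∧ (w = W ∨ w = Wᶜ) ∧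
    eLT H X u v ∧ eLT H X v w

/-- The setoid on `E` whose classes are the cross-connected components of `Ē`. -/
def cccSetoid (H : ι → Subgroup G) (X : ι → Set G) :
    Setoid {U : Set G // U ∈ Translates X} where
  r u v := SameCCC H X u.1 v.1
  iseqv := by
    refine ⟨fun u => Relation.EqvGen.refl _, ?_, ?_⟩
    · exact fun h => Relation.EqvGen.symm _ _ h
    · exact fun h₁ h₂ => Relation.EqvGen.trans _ _ _ h₁ h₂

theorem leftTr_leftTr (g g' : G) (X : Set G) : leftTr g (leftTr g' X) = leftTr (g * g') X := by
  simp only [leftTr, Set.image_image, mul_assoc]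

theorem leftTr_compl (g : G) (X : Set G) : leftTr g Xᶜ = (leftTr g X)ᶜ :=
  Set.image_compl_eq (Group.mulLeft_bijective g)

/-- Left translation as a map from `E` to `E`. -/
def translateE (X : ι → Set G) (g : G) (u : {U : Set G // U ∈ Translates X}) :
    {U : Set G // U ∈ Translates X} :=
  ⟨leftTr g u.1, by
    obtain ⟨g', i, h | h⟩ := u.2
    · exact ⟨g * g', i, Or.inl (by rw [h, leftTr_leftTr])⟩
    · exact ⟨g * g', i, Or.inr (by rw [h, leftTr_compl, leftTr_leftTr])⟩⟩

/-- Betweenness for cross-connected components: `B` lies between the distinct components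
`A` and `C` if there are elements enclosed by them with `u < v < w`. -/
def BetweenCCC (H : ι → Subgroup G) (X : ι → Set G)
    (A B C : Quotient (cccSetoid H X)) : Prop :=
  A ≠ B ∧ B ≠ C ∧ A ≠ C ∧
    ∃ u v w : {U : Set G // U ∈ Translates X},
      Quotient.mk (cccSetoid H X) u = A ∧ Quotient.mk (cccSetoid H X) v = B ∧
        Quotient.mk (cccSetoid H X) w = C ∧
        eLT H X u.1 v.1 ∧ eLT H X v.1 w.1

/-- The half-tree `Y_s` determined by the oriented edge `s = (u,v)`: the vertices
reachable from the terminal vertex `v` after deleting the edge `{u,v}`. -/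
def halfTree {V : Type*} (T : SimpleGraph V) (u v : V) : Set V :=
  {w : V | (T.deleteEdges {s(u, v)}).Reachable v w}

/-- With respect to a base vertex `b`, the subset `Z_s` of `G` determined by the
oriented edge `s = (u,v)`. -/
def Zset {V : Type*} [MulAction G V] (T : SimpleGraph V) (b u v : V) : Set G :=
  {g : G | g • b ∈ halfTree T u v}

/-- The vertex `v` encloses the `H`-almost invariant set `A`: for every edge `s`
oriented towards `v`, either `A ∩ Z_s*` or `A* ∩ Z_s*` is `H`-finite. -/
def Encloses {V : Type*} [MulAction G V] (T : SimpleGraph V) (b : V) (H : Subgroup G)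
    (v : V) (A : Set G) : Prop :=
  ∀ u : V, T.Adj u v → HFinite H (A ∩ (Zset T b u v)ᶜ) ∨ HFinite H (Aᶜ ∩ (Zset T b u v)ᶜ)

end Defs

section AuxProof

variable {G V : Type*} [Group G] [MulAction G V]

lemma hfin_mono' {H : Subgroup G} {W W' : Set G} (h : W ⊆ W') (h' : HFinite H W') :
    HFinite H W := by
  obtain ⟨F, hF⟩ := h'
  exact ⟨F, h.trans hF⟩

lemma hfin_union' {H : Subgroup G} {A B : Set G} (hA : HFinite H A) (hB : HFinite H B) :
    HFinite H (A ∪ B) := by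
  classical
  obtain ⟨F, hF⟩ := hA
  obtain ⟨F', hF'⟩ := hB
  refine ⟨F ∪ F', ?_⟩
  rintro x (hx | hx)
  · obtain ⟨g, hg, hx'⟩ := Set.mem_iUnion₂.1 (hF hx)
    exact Set.mem_biUnion (Finset.mem_union_left _ hg) hx'
  · obtain ⟨g, hg, hx'⟩ := Set.mem_iUnion₂.1 (hF' hx)
    exact Set.mem_biUnion (Finset.mem_union_right _ hg) hx'

lemma hfin_biUnion' {H : Subgroup G} {α : Type*} (s : Finset α)
    (f : α → Set G) (h : ∀ a ∈ s, HFinite H (f a)) : HFinite H (⋃ a ∈ s, f a) := by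
  classical
  induction s using Finset.induction_on with
  | empty => exact ⟨∅, by simp⟩
  | @insert a s' hx ih =>
    rw [Finset.set_biUnion_insert]
    exact hfin_union' (h a (Finset.mem_insert_self a s'))
      (ih fun b hb => h b (Finset.mem_insert_of_mem hb))

lemma hfin_of_quot' {H : Subgroup G} {W : Set G}
    (h : ∀ g₁ ∈ W, ∀ g₂ ∈ W, g₁ * g₂⁻¹ ∈ H) : HFinite H W := by
  rcases W.eq_empty_or_nonempty with rfl | ⟨g₀, hg₀⟩
  · exact ⟨∅, by simp⟩
  · refine ⟨{g₀}, fun g hg => ?_⟩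
    refine Set.mem_biUnion (Finset.mem_singleton_self g₀) ?_
    exact ⟨g * g₀⁻¹, h g hg g₀ hg₀, by group⟩

lemma coset_fin' {H : Subgroup G} (x y a c : V)
    (hH : ∀ g : G, g • a = a → g • c = c → g ∈ H) :
    HFinite H {g : G | g • x = a ∧ g • y = c} := by
  apply hfin_of_quot'
  rintro g₁ ⟨h1a, h1c⟩ g₂ ⟨h2a, h2c⟩
  apply hH
  · rw [mul_smul, inv_smul_eq_iff.mpr h2a.symm]
    exact h1a
  · rw [mul_smul, inv_smul_eq_iff.mpr h2c.symm]
    exact h1c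

lemma smul_reach' (T : SimpleGraph V) (u v : V)
    (hadj : ∀ (g : G) (x y : V), T.Adj x y → T.Adj (g • x) (g • y))
    (h : G) (hu : h • u = u) (hv : h • v = v) :
    ∀ {x y : V}, (T.deleteEdges {s(u, v)}).Reachable x y →
      (T.deleteEdges {s(u, v)}).Reachable (h • x) (h • y) := by
  intro x y hr
  obtain ⟨w⟩ := hr
  induction w with
  | nil => exact SimpleGraph.Reachable.refl _
  | cons ha p ih =>
    rename_i a m c
    rw [SimpleGraph.deleteEdges_adj] at ha
    refine SimpleGraph.Reachable.trans (SimpleGraph.Adj.reachable ?_) ih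
    rw [SimpleGraph.deleteEdges_adj]
    refine ⟨hadj h _ _ ha.1, ?_⟩
    intro hmem
    apply ha.2
    simp only [Set.mem_singleton_iff, Sym2.eq_iff] at hmem ⊢
    rcases hmem with ⟨h1, h2⟩ | ⟨h1, h2⟩
    · rw [← hu] at h1; rw [← hv] at h2
      exact Or.inl ⟨smul_left_cancel h h1, smul_left_cancel h h2⟩
    · rw [← hv] at h1; rw [← hu] at h2
      exact Or.inr ⟨smul_left_cancel h h1, smul_left_cancel h h2⟩

lemma smul_mem_half' (T : SimpleGraph V) (u v : V)
    (hadj : ∀ (g : G) (x y : V), T.Adj x y → T.Adj (g • x) (g • y))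
    (h : G) (hu : h • u = u) (hv : h • v = v) {w : V}
    (hw : w ∈ halfTree T u v) : h • w ∈ halfTree T u v := by
  have := smul_reach' T u v hadj h hu hv hw
  rwa [hv] at this

lemma cross_edge' (T : SimpleGraph V) (u v : V)
    (hadj : ∀ (g : G) (x y : V), T.Adj x y → T.Adj (g • x) (g • y)) (g : G) :
    ∀ {a c : V} (w : T.Walk a c), g • a ∈ halfTree T u v → g • c ∉ halfTree T u v →
      ∃ d ∈ w.darts, (g • d.fst = u ∧ g • d.snd = v) ∨ (g • d.fst = v ∧ g • d.snd = u) := by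
  intro a c w
  induction w with
  | nil => intro ha hc; exact absurd ha hc
  | cons ha p ih =>
    rename_i a m c
    intro hga hgc
    by_cases hcase : (g • a = u ∧ g • m = v) ∨ (g • a = v ∧ g • m = u)
    · exact ⟨⟨(a, m), ha⟩, List.mem_cons_self, hcase⟩
    · have hm : g • m ∈ halfTree T u v := by
        refine SimpleGraph.Reachable.trans hga (SimpleGraph.Adj.reachable ?_)
        rw [SimpleGraph.deleteEdges_adj]
        refine ⟨hadj g _ _ ha, ?_⟩
        intro hmem
        apply hcase
        simpa [Sym2.eq_iff] using hmem
      obtain ⟨d, hd, hd'⟩ := ih hm hgc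
      exact ⟨d, by rw [SimpleGraph.Walk.darts_cons]; exact List.mem_cons_of_mem _ hd, hd'⟩

lemma key_symmDiff (T : SimpleGraph V) (u v : V) (hconn : T.Connected)
    (hadj : ∀ (g : G) (x y : V), T.Adj x y → T.Adj (g • x) (g • y)) (b b' : V) :
    HFinite (MulAction.stabilizer G u ⊓ MulAction.stabilizer G v)
      (symmDiff (Zset T b u v) (Zset T b' u v)) := by
  classical
  obtain ⟨p⟩ := hconn.preconnected b b'
  set S := MulAction.stabilizer G u ⊓ MulAction.stabilizer G v with hS
  have hSmem : ∀ g : G, g • u = u → g • v = v → g ∈ S := by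
    intro g h1 h2
    exact Subgroup.mem_inf.2 ⟨h1, h2⟩
  set f : T.Dart → Set G := fun d =>
    {g : G | g • d.fst = u ∧ g • d.snd = v} ∪ {g : G | g • d.fst = v ∧ g • d.snd = u}
    with hf
  refine hfin_mono' (W' := ⋃ d ∈ p.darts.toFinset ∪ p.reverse.darts.toFinset, f d) ?_ ?_
  · intro g hg
    rw [Set.mem_symmDiff] at hg
    rcases hg with ⟨h1, h2⟩ | ⟨h1, h2⟩
    · obtain ⟨d, hd, hd'⟩ := cross_edge' T u v hadj g p h1 h2
      exact Set.mem_biUnion (Finset.mem_union_left _ (List.mem_toFinset.2 hd)) hd'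
    · obtain ⟨d, hd, hd'⟩ := cross_edge' T u v hadj g p.reverse h1 h2
      exact Set.mem_biUnion (Finset.mem_union_right _ (List.mem_toFinset.2 hd)) hd'
  · refine hfin_biUnion' _ _ ?_
    intro d _
    refine hfin_union' ?_ ?_
    · exact coset_fin' d.fst d.snd u v fun g h1 h2 => hSmem g h1 h2
    · exact coset_fin' d.fst d.snd v u fun g h1 h2 => hSmem g h2 h1

end AuxProof
/-- For a group acting without inversions on a tree, the set
`Z_b = {g | g·b ∈ Y_s}` determined by an oriented edge `s = (u,v)` is almost invariant
over the stabiliser `S` of `s` (in particular `S·Z_b = Z_b`), and its equivalence class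
is independent of the base vertex `b`. -/
theorem stmt0 {G V : Type*} [Group G] [MulAction G V] (T : SimpleGraph V)
    (htree : T.IsTree)
    (hadj : ∀ (g : G) (x y : V), T.Adj x y → T.Adj (g • x) (g • y))
    (hinv : ∀ (g : G) (x y : V), T.Adj x y → ¬(g • x = y ∧ g • y = x))
    (u v : V) (he : T.Adj u v) :
    (∀ b : V, AlmostInv (MulAction.stabilizer G u ⊓ MulAction.stabilizer G v)
        (Zset T b u v)) ∧
    (∀ b b' : V, HFinite (MulAction.stabilizer G u ⊓ MulAction.stabilizer G v)
        (symmDiff (Zset T b u v) (Zset T b' u v))) := by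
  classical
  set S := MulAction.stabilizer G u ⊓ MulAction.stabilizer G v with hS
  have hSmem : ∀ h ∈ S, h • u = u ∧ h • v = v := fun h hh =>
    ⟨(Subgroup.mem_inf.1 hh).1, (Subgroup.mem_inf.1 hh).2⟩
  have key := fun b b' => key_symmDiff T u v htree.isConnected hadj b b' (G := G)
  refine ⟨fun b => ⟨?_, ?_⟩, key⟩
  · -- leftTr h (Zset T b u v) = Zset T b u v for h ∈ S
    intro h hh
    obtain ⟨hu', hv'⟩ := hSmem h hh
    ext g
    constructor
    · rintro ⟨x, hx, rfl⟩
      show (h * x) • b ∈ halfTree T u v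
      rw [mul_smul]
      exact smul_mem_half' T u v hadj h hu' hv' hx
    · intro hg
      refine ⟨h⁻¹ * g, ?_, by group⟩
      show (h⁻¹ * g) • b ∈ halfTree T u v
      rw [mul_smul]
      refine smul_mem_half' T u v hadj h⁻¹ ?_ ?_ hg
      · rw [inv_smul_eq_iff, hu']
      · rw [inv_smul_eq_iff, hv']
  · intro g
    have himg : (· * g) '' (Zset T b u v) = Zset T (g⁻¹ • b) u v := by
      ext k
      constructor
      · rintro ⟨x, hx, rfl⟩
        show (x * g) • (g⁻¹ • b) ∈ halfTree T u v
        rw [mul_smul, smul_inv_smul]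
        exact hx
      · intro hk
        refine ⟨k * g⁻¹, ?_, by group⟩
        show (k * g⁻¹) • b ∈ halfTree T u v
        rw [mul_smul]
        exact hk
    rw [himg]
    exact key b (g⁻¹ • b)
end

section
/- Let G be a finitely generated group, H₁,…,Hₙ finitely generated subgroups, Xᵢ a nontrivial Hᵢ-almost invariant subset of G for each i, and suppose the family X₁,…,Xₙ is in good position, with the induced relation ≤ on E. If U, V, Z ∈ E satisfy U ≤ V, Z crosses U, and Z does not cross V, then Z ≤ V or Z* ≤ V; if moreover U < V, then Z < V or Z* < V. -/
section AuxStmt6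

open scoped Pointwise

variable {G : Type*} [Group G]

/-! ### Basic membership lemmas -/

theorem aux_mem_leftTr {g x : G} {A : Set G} : x ∈ leftTr g A ↔ g⁻¹ * x ∈ A := by
  constructor
  · rintro ⟨y, hy, rfl⟩; simpa using hy
  · intro h; exact ⟨g⁻¹ * x, h, by group⟩

theorem aux_leftTr_union (g : G) (A B : Set G) :
    leftTr g (A ∪ B) = leftTr g A ∪ leftTr g B := Set.image_union _ _ _

theorem aux_mul_mem_iff {L : Subgroup G} {A : Set G}
    (hinv : ∀ h ∈ L, leftTr h A = A) {h x : G} (hh : h ∈ L) :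
    h * x ∈ A ↔ x ∈ A := by
  have hup : ∀ k ∈ L, ∀ y, y ∈ A → k * y ∈ A := by
    intro k hk y hy
    have : k * y ∈ leftTr k A := ⟨y, hy, rfl⟩
    rwa [hinv k hk] at this
  constructor
  · intro hx
    have := hup h⁻¹ (inv_mem hh) _ hx
    simpa [inv_mul_cancel_left] using this
  · exact hup h hh x

/-! ### `HFin`: a `Set`-based version of `HFinite` -/

/-- `W` is contained in `L * T` for some finite `T`. -/
def HFin (L : Subgroup G) (W : Set G) : Prop :=
  ∃ T : Set G, T.Finite ∧ W ⊆ (L : Set G) * T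

theorem aux_hfinite_iff {L : Subgroup G} {W : Set G} : HFinite L W ↔ HFin L W := by
  constructor
  · rintro ⟨F, hF⟩
    refine ⟨(F : Set G), F.finite_toSet, fun x hx => ?_⟩
    obtain ⟨g, hg, hx'⟩ := Set.mem_iUnion₂.1 (hF hx)
    obtain ⟨h, hh, rfl⟩ := hx'
    exact Set.mul_mem_mul hh hg
  · rintro ⟨T, hTfin, hT⟩
    refine ⟨hTfin.toFinset, fun x hx => ?_⟩
    obtain ⟨l, hl, t, ht, rfl⟩ := Set.mem_mul.1 (hT hx)
    exact Set.mem_iUnion₂.2 ⟨t, hTfin.mem_toFinset.2 ht, ⟨l, hl, rfl⟩⟩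

theorem aux_hfin_mono {L : Subgroup G} {W W' : Set G} (h : W' ⊆ W) (hf : HFin L W) :
    HFin L W' := by
  obtain ⟨T, h1, h2⟩ := hf
  exact ⟨T, h1, h.trans h2⟩

theorem aux_hfin_empty (L : Subgroup G) : HFin L (∅ : Set G) :=
  ⟨∅, Set.finite_empty, by simp⟩

theorem aux_hfin_union {L : Subgroup G} {W W' : Set G} (h : HFin L W) (h' : HFin L W') :
    HFin L (W ∪ W') := by
  obtain ⟨T, h1, h2⟩ := h
  obtain ⟨T', h1', h2'⟩ := h'
  refine ⟨T ∪ T', h1.union h1', fun x hx => ?_⟩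
  rcases hx with hx | hx
  · exact Set.mul_subset_mul_left Set.subset_union_left (h2 hx)
  · exact Set.mul_subset_mul_left Set.subset_union_right (h2' hx)

theorem aux_coe_mul_coe (L : Subgroup G) : (L : Set G) * (L : Set G) = (L : Set G) := by
  ext x
  constructor
  · rintro ⟨a, ha, b, hb, rfl⟩
    exact mul_mem ha hb
  · intro hx
    exact ⟨x, hx, 1, one_mem L, mul_one x⟩

theorem aux_hfin_mul_fin {L : Subgroup G} {W T' : Set G} (h : HFin L W) (hT' : T'.Finite) :
    HFin L (W * T') := by
  obtain ⟨T, h1, h2⟩ := h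
  refine ⟨T * T', h1.mul hT', ?_⟩
  rw [← mul_assoc]
  exact Set.mul_subset_mul_right h2

theorem aux_hfin_groupmul {L : Subgroup G} {W : Set G} (h : HFin L W) :
    HFin L ((L : Set G) * W) := by
  obtain ⟨T, h1, h2⟩ := h
  refine ⟨T, h1, ?_⟩
  calc (L : Set G) * W ⊆ (L : Set G) * ((L : Set G) * T) := Set.mul_subset_mul_left h2
    _ = ((L : Set G) * (L : Set G)) * T := (mul_assoc _ _ _).symm
    _ = (L : Set G) * T := by rw [aux_coe_mul_coe]

theorem aux_hfin_biUnion {L : Subgroup G} {T : Set G} (hT : T.Finite) {f : G → Set G}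
    (h : ∀ s ∈ T, HFin L (f s)) : HFin L (⋃ s ∈ T, f s) := by
  revert h
  refine Set.Finite.induction_on (motive := fun T _ => (∀ s ∈ T, HFin L (f s)) → HFin L (⋃ s ∈ T, f s)) T hT (fun _ => ?_) ?_
  · simpa using aux_hfin_empty L
  · intro a s _ _ ih h
    rw [Set.biUnion_insert]
    exact aux_hfin_union (h a (Set.mem_insert a s))
      (ih fun x hx => h x (Set.mem_insert_of_mem a hx))

/-- membership in the conjugate subgroup -/
theorem aux_mem_conjSub {g x : G} {L : Subgroup G} :
    x ∈ conjSub g L ↔ ∃ l ∈ L, g * l * g⁻¹ = x := by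
  simp [conjSub, Subgroup.mem_map]

theorem aux_hfin_leftTr {L : Subgroup G} {W : Set G} (g : G) (h : HFin L W) :
    HFin (conjSub g L) (leftTr g W) := by
  obtain ⟨T, h1, h2⟩ := h
  refine ⟨leftTr g T, h1.image _, ?_⟩
  rintro x ⟨y, hy, rfl⟩
  obtain ⟨l, hl, t, ht, rfl⟩ := Set.mem_mul.1 (h2 hy)
  refine ⟨g * l * g⁻¹, ?_, g * t, ⟨t, ht, rfl⟩, by group⟩
  exact SetLike.mem_coe.2 (aux_mem_conjSub.2 ⟨l, SetLike.mem_coe.1 hl, rfl⟩)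

theorem aux_hfin_of_leftTr {L : Subgroup G} {W : Set G} (g : G)
    (h : HFin (conjSub g L) (leftTr g W)) : HFin L W := by
  obtain ⟨T, h1, h2⟩ := h
  refine ⟨leftTr g⁻¹ T, h1.image _, fun x hx => ?_⟩
  obtain ⟨c, hc, t, ht, heq⟩ := Set.mem_mul.1 (h2 ⟨x, hx, rfl⟩)
  obtain ⟨l, hl, rfl⟩ := aux_mem_conjSub.1 (SetLike.mem_coe.1 hc)
  refine ⟨l, SetLike.mem_coe.2 hl, g⁻¹ * t, ⟨t, ht, rfl⟩, ?_⟩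
  have : g * x = (g * l * g⁻¹) * t := heq.symm
  have hx' : x = l * (g⁻¹ * t) := by
    apply mul_left_cancel (a := g)
    rw [this]; group
  exact hx'.symm

/-! ### boundary lemmas -/

theorem aux_bdry_compl (S : Finset G) (A : Set G) : bdry S Aᶜ = bdry S A := by
  ext x
  simp only [bdry, Set.mem_setOf_eq, Set.mem_compl_iff, ne_eq, eq_iff_iff, not_iff_not]

theorem aux_bdry_leftTr (S : Finset G) (g : G) (A : Set G) :
    bdry S (leftTr g A) = leftTr g (bdry S A) := by
  ext x
  simp only [bdry, Set.mem_setOf_eq, aux_mem_leftTr, mul_assoc]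

theorem aux_bdry_union_subset (S : Finset G) (A B : Set G) :
    bdry S (A ∪ B) ⊆ bdry S A ∪ bdry S B := by
  rintro x ⟨s, hs, hne⟩
  by_cases hA : (x ∈ A) = (x * s ∈ A)
  · by_cases hB : (x ∈ B) = (x * s ∈ B)
    · exfalso
      apply hne
      rw [eq_iff_iff] at hA hB ⊢
      simp only [Set.mem_union]
      tauto
    · exact Or.inr ⟨s, hs, hB⟩
  · exact Or.inl ⟨s, hs, hA⟩

theorem aux_bdry_inter_subset (S : Finset G) (A B : Set G) :
    bdry S (A ∩ B) ⊆ bdry S A ∪ bdry S B := by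
  have : bdry S (A ∩ B) = bdry S (Aᶜ ∪ Bᶜ) := by
    rw [← aux_bdry_compl, Set.compl_inter]
  rw [this]
  have h2 := aux_bdry_union_subset S Aᶜ Bᶜ
  rwa [aux_bdry_compl, aux_bdry_compl] at h2

theorem aux_bdry_subset (S : Finset G) (W : Set G) :
    bdry S W ⊆ W ∪ W * ((S : Set G) ∪ (S : Set G)⁻¹) := by
  rintro x ⟨s, hs, hne⟩
  by_cases hx : x ∈ W
  · exact Or.inl hx
  · have hxs : x * s ∈ W := by
      by_contra h
      apply hne
      rw [eq_iff_iff]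
      exact ⟨fun h' => absurd h' hx, fun h' => absurd h' h⟩
    refine Or.inr ⟨x * s, hxs, s⁻¹, ?_, by group⟩
    rcases hs with hs | hs
    · exact Or.inr (Set.mem_inv.2 (by simpa using hs))
    · exact Or.inl (by simpa using Set.mem_inv.1 hs)

theorem aux_hfin_bdry_of_hfin {L : Subgroup G} (S : Finset G) {W : Set G} (h : HFin L W) :
    HFin L (bdry S W) := by
  apply aux_hfin_mono (aux_bdry_subset S W)
  refine aux_hfin_union h (aux_hfin_mul_fin h ?_)
  exact (S.finite_toSet).union (S.finite_toSet.inv)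

/-! ### balls in the Cayley graph -/

/-- The (symmetrised, 1-augmented) generating set. -/
def Bset (S : Finset G) : Set G := (S : Set G) ∪ (S : Set G)⁻¹ ∪ {1}

/-- The ball of radius `r`. -/
def ball (S : Finset G) (r : ℕ) : Set G := (Bset S) ^ r

theorem aux_one_mem_Bset (S : Finset G) : (1 : G) ∈ Bset S := Or.inr rfl

theorem aux_Bset_finite (S : Finset G) : (Bset S).Finite :=
  (S.finite_toSet.union S.finite_toSet.inv).union (Set.finite_singleton 1)

theorem aux_Bset_symm {S : Finset G} {x : G} (h : x ∈ Bset S) : x⁻¹ ∈ Bset S := by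
  rcases h with (h | h) | h
  · exact Or.inl (Or.inr (Set.mem_inv.2 (by simpa using h)))
  · exact Or.inl (Or.inl (by simpa using Set.mem_inv.1 h))
  · simp only [Set.mem_singleton_iff] at h
    subst h
    exact Or.inr (by simp [Set.mem_singleton_iff])

theorem aux_ball_finite (S : Finset G) (r : ℕ) : (ball S r).Finite := by
  induction r with
  | zero => simpa [ball] using Set.finite_singleton (1 : G)
  | succ n ih =>
    rw [ball, pow_succ]
    exact Set.Finite.mul ih (aux_Bset_finite S)

theorem aux_one_mem_ball (S : Finset G) (r : ℕ) : (1 : G) ∈ ball S r := by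
  induction r with
  | zero => simp [ball, Set.mem_one]
  | succ n ih =>
    rw [ball, pow_succ]
    simpa [ball] using Set.mul_mem_mul ih (aux_one_mem_Bset S)

theorem aux_ball_mono (S : Finset G) {r r' : ℕ} (h : r ≤ r') : ball S r ⊆ ball S r' := by
  obtain ⟨k, rfl⟩ := Nat.exists_eq_add_of_le h
  intro x hx
  rw [ball, pow_add]
  simpa [ball] using Set.mul_mem_mul hx (aux_one_mem_ball S k)

theorem aux_ball_symm (S : Finset G) {r : ℕ} {x : G} (h : x ∈ ball S r) : x⁻¹ ∈ ball S r := by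
  induction r generalizing x with
  | zero =>
    rw [ball, pow_zero, Set.mem_one] at h ⊢
    simp [h]
  | succ n ih =>
    rw [ball, pow_succ] at h
    obtain ⟨y, hy, s, hs, rfl⟩ := Set.mem_mul.1 h
    rw [ball, pow_succ']
    have : (y * s)⁻¹ = s⁻¹ * y⁻¹ := by group
    rw [this]
    exact Set.mul_mem_mul (aux_Bset_symm hs) (ih hy)

theorem aux_list_prod_mem_ball (S : Finset G) :
    ∀ l : List G, (∀ y ∈ l, y ∈ Bset S) → l.prod ∈ ball S l.length := by
  intro l
  induction l with
  | nil => intro _; simp [ball, List.prod_nil, Set.mem_one]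
  | cons a t ih =>
    intro hl
    rw [List.prod_cons, List.length_cons, ball, pow_succ']
    exact Set.mul_mem_mul (hl a List.mem_cons_self)
      (ih fun y hy => hl y (List.mem_cons_of_mem a hy))

theorem aux_exists_mem_ball (S : Finset G) (hS : Subgroup.closure (S : Set G) = ⊤) (g : G) :
    ∃ r, g ∈ ball S r := by
  have hg : g ∈ Subgroup.closure (S : Set G) := hS ▸ Subgroup.mem_top g
  rw [← Subgroup.mem_toSubmonoid, Subgroup.closure_toSubmonoid] at hg
  obtain ⟨l, hl, rfl⟩ := Submonoid.exists_list_of_mem_closure hg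
  exact ⟨l.length, aux_list_prod_mem_ball S l (fun y hy => Or.inl (hl y hy))⟩

/-- If `w ∈ B` and the whole `r`-ball around `w` misses `∂B`, then the ball is inside `B`. -/
theorem aux_ball_subset_of_deep (S : Finset G) {B : Set G} {w : G} (hw : w ∈ B) {R : ℕ}
    (hdeep : ∀ b ∈ ball S R, w * b ∉ bdry S B) : ∀ b ∈ ball S R, w * b ∈ B := by
  have aux : ∀ n, n ≤ R → ∀ b ∈ ball S n, w * b ∈ B := by
    intro n
    induction n with
    | zero =>
      intro _ b hb
      rw [ball, pow_zero, Set.mem_one] at hb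
      subst hb; simpa using hw
    | succ n ih =>
      intro hn b hb
      rw [ball, pow_succ] at hb
      obtain ⟨b', hb', s, hs, rfl⟩ := Set.mem_mul.1 hb
      have hb'R : b' ∈ ball S R := aux_ball_mono S (le_trans (Nat.le_succ n) hn) hb'
      have h1 : w * b' ∈ B := ih (le_trans (Nat.le_succ n) hn) b' hb'
      have h2 : w * b' ∉ bdry S B := hdeep b' hb'R
      rcases hs with hs | hs
      · -- s ∈ S ∪ S⁻¹
        have : (w * b' ∈ B) = (w * b' * s ∈ B) := by
          by_contra hne
          exact h2 ⟨s, hs, hne⟩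
        rw [← mul_assoc]
        rw [eq_iff_iff] at this
        exact this.1 h1
      · simp only [Set.mem_singleton_iff] at hs
        subst hs
        simpa [mul_one] using h1
  exact aux R le_rfl

/-! ### The transfer lemma (Scott's symmetry of smallness) -/

theorem aux_transfer (S : Finset G) (hS : Subgroup.closure (S : Set G) = ⊤)
    {L K : Subgroup G} {A B : Set G}
    (hinv : ∀ h ∈ L, leftTr h A = A) (hnA : ¬ HFin L A)
    (hbB : HFin K (bdry S B)) (hAB : HFin L (A ∩ B)) : HFin K (A ∩ B) := by
  by_contra hK
  obtain ⟨D, hDfin, hD⟩ := hAB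
  -- deep points
  have hw : ∀ r : ℕ, ∃ w, w ∈ A ∩ B ∧ w ∉ bdry S B * ball S r := by
    intro r
    by_contra hcon
    push_neg at hcon
    exact hK (aux_hfin_mono (fun x hx => hcon x hx) (aux_hfin_mul_fin hbB (aux_ball_finite S r)))
  choose w hwAB hwdeep using hw
  have hballB : ∀ r, ∀ b ∈ ball S r, w r * b ∈ B := by
    intro r
    apply aux_ball_subset_of_deep S (hwAB r).2
    intro b hb hmem
    exact hwdeep r (Set.mem_mul.2 ⟨w r * b, hmem, b⁻¹, aux_ball_symm S hb, by group⟩)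
  have hwdec : ∀ r, ∃ dd, dd ∈ D ∧ ∃ hh, hh ∈ L ∧ hh * dd = w r := by
    intro r
    obtain ⟨h, hh, dd, hd, heq⟩ := Set.mem_mul.1 (hD (hwAB r))
    exact ⟨dd, hd, h, SetLike.mem_coe.1 hh, heq⟩
  choose d hdD h hhL hhw using hwdec
  have key : ∀ r, ∀ b ∈ ball S r, d r * b ∈ A → d r * b ∈ (L : Set G) * D := by
    intro r b hb hA'
    have h1 : w r * b ∈ A := by
      rw [← hhw r, mul_assoc]
      exact (aux_mul_mem_iff hinv (hhL r)).2 hA'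
    have h2 : w r * b ∈ B := hballB r b hb
    have h3 := hD ⟨h1, h2⟩
    obtain ⟨l, hl, f, hf, heq⟩ := Set.mem_mul.1 h3
    have hdb : d r * b = ((h r)⁻¹ * l) * f := by
      have : h r * (d r * b) = l * f := by rw [← mul_assoc, hhw r, heq]
      rw [mul_assoc, ← this]; group
    rw [hdb]
    exact Set.mul_mem_mul
      (SetLike.mem_coe.2 (mul_mem (inv_mem (hhL r)) (SetLike.mem_coe.1 hl))) hf
  -- pigeonhole
  haveI : Finite D := hDfin.to_subtype
  obtain ⟨⟨d₀, hd₀⟩, hfib⟩ := Finite.exists_infinite_fiber (fun r : ℕ => (⟨d r, hdD r⟩ : D))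
  have hfib' : {r : ℕ | d r = d₀}.Infinite := by
    rw [Set.infinite_coe_iff] at hfib
    apply hfib.mono
    intro r hr
    simp only [Set.mem_preimage, Set.mem_singleton_iff] at hr
    exact Subtype.ext_iff.1 hr
  apply hnA
  refine ⟨D, hDfin, fun x hx => ?_⟩
  obtain ⟨m, hm⟩ := aux_exists_mem_ball S hS (d₀⁻¹ * x)
  obtain ⟨r, hrmem, hrgt⟩ := hfib'.exists_gt m
  have hrd : d r = d₀ := hrmem
  have hball : d₀⁻¹ * x ∈ ball S r := aux_ball_mono S (le_of_lt hrgt) hm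
  have hk := key r (d₀⁻¹ * x) hball (by rw [hrd, mul_inv_cancel_left]; exact hx)
  rwa [hrd, mul_inv_cancel_left] at hk

end AuxStmt6

section AuxStmt6B

open scoped Pointwise

variable {G : Type*} [Group G]

/-- The package of facts we need about an element of `E` over a subgroup `L`. -/
def NiceAI (S : Finset G) (L : Subgroup G) (A : Set G) : Prop :=
  (∀ h ∈ L, leftTr h A = A) ∧ HFin L (bdry S A) ∧ ¬ HFin L A ∧ ¬ HFin L Aᶜ

theorem aux_nice_compl {S : Finset G} {L : Subgroup G} {A : Set G} (h : NiceAI S L A) :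
    NiceAI S L Aᶜ := by
  obtain ⟨h1, h2, h3, h4⟩ := h
  refine ⟨fun k hk => ?_, ?_, h4, by rwa [compl_compl]⟩
  · rw [leftTr_compl, h1 k hk]
  · rwa [aux_bdry_compl]

/-- The base case: each `X i` is nice over `H i`. -/
theorem aux_nice_base {S : Finset G} {Hi : Subgroup G} {Xi : Set G}
    (hnt : NontrivialAI Hi Xi) : NiceAI S Hi Xi := by
  obtain ⟨⟨hinv, hai⟩, hnX, hnXc⟩ := hnt
  refine ⟨hinv, ?_, fun hf => hnX (aux_hfinite_iff.2 hf), fun hf => hnXc (aux_hfinite_iff.2 hf)⟩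
  have hsub : bdry S Xi ⊆
      ⋃ s ∈ ((S : Set G) ∪ (S : Set G)⁻¹), {g : G | (g ∈ Xi) ≠ (g * s ∈ Xi)} := by
    rintro x ⟨s, hs, hne⟩
    exact Set.mem_biUnion hs hne
  apply aux_hfin_mono hsub
  apply aux_hfin_biUnion (S.finite_toSet.union S.finite_toSet.inv)
  intro s _
  have hsub2 : {g : G | (g ∈ Xi) ≠ (g * s ∈ Xi)} ⊆ symmDiff Xi ((· * s⁻¹) '' Xi) := by
    intro g hg
    simp only [Set.mem_setOf_eq] at hg
    have himg : g ∈ (· * s⁻¹) '' Xi ↔ g * s ∈ Xi := by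
      constructor
      · rintro ⟨a, ha, rfl⟩; simpa using ha
      · intro h; exact ⟨g * s, h, by group⟩
    rw [Set.mem_symmDiff]
    by_cases hgx : g ∈ Xi
    · left
      refine ⟨hgx, fun hc => hg ?_⟩
      rw [eq_iff_iff]
      exact ⟨fun _ => himg.1 hc, fun _ => hgx⟩
    · right
      have hgs : g * s ∈ Xi := by
        by_contra hc
        exact hg (by rw [eq_iff_iff]; exact ⟨fun h => absurd h hgx, fun h => absurd h hc⟩)
      exact ⟨himg.2 hgs, hgx⟩
  exact aux_hfin_mono hsub2 (aux_hfinite_iff.1 (hai s⁻¹))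

theorem aux_nice_leftTr {S : Finset G} {L : Subgroup G} {A : Set G} (g : G)
    (h : NiceAI S L A) : NiceAI S (conjSub g L) (leftTr g A) := by
  obtain ⟨h1, h2, h3, h4⟩ := h
  refine ⟨?_, ?_, ?_, ?_⟩
  · intro k hk
    obtain ⟨l, hl, rfl⟩ := aux_mem_conjSub.1 hk
    rw [leftTr_leftTr]
    have : g * l * g⁻¹ * g = g * l := by group
    rw [this, ← leftTr_leftTr, h1 l hl]
  · rw [aux_bdry_leftTr]
    exact aux_hfin_leftTr g h2
  · intro hf; exact h3 (aux_hfin_of_leftTr g hf)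
  · intro hf
    apply h4
    apply aux_hfin_of_leftTr g
    rwa [leftTr_compl]

theorem aux_rep_nice {n : ℕ} {H : Fin n → Subgroup G} {X : Fin n → Set G}
    (hnt : ∀ i, NontrivialAI (H i) (X i)) (S : Finset G) (g : G) (i : Fin n) {A : Set G}
    (hor : A = leftTr g (X i) ∨ A = (leftTr g (X i))ᶜ) :
    NiceAI S (conjSub g (H i)) A := by
  rcases hor with rfl | rfl
  · exact aux_nice_leftTr g (aux_nice_base (hnt i))
  · exact aux_nice_compl (aux_nice_leftTr g (aux_nice_base (hnt i)))

theorem aux_leftTr_coe_mul {L : Subgroup G} {h : G} (hh : h ∈ L) (W : Set G) :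
    leftTr h ((L : Set G) * W) = (L : Set G) * W := by
  ext x
  constructor
  · rintro ⟨y, hy, rfl⟩
    obtain ⟨l, hl, w, hw, rfl⟩ := Set.mem_mul.1 hy
    exact ⟨h * l, SetLike.mem_coe.2 (mul_mem hh (SetLike.mem_coe.1 hl)), w, hw, by group⟩
  · intro hx
    obtain ⟨l, hl, w, hw, rfl⟩ := Set.mem_mul.1 hx
    refine ⟨h⁻¹ * l * w, ?_, by group⟩
    exact Set.mul_mem_mul (SetLike.mem_coe.2 (mul_mem (inv_mem hh) (SetLike.mem_coe.1 hl))) hw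

/-- The surgery lemma for the "wrong-corner" case: if `U ∩ Vᶜ` and `V ∩ Z` are both
small over `V`'s group, then `U ∩ Z` is small over `Z`'s group. -/
theorem aux_case3 (S : Finset G) (hS : Subgroup.closure (S : Set G) = ⊤)
    {LV LZ : Subgroup G} {V Z : Set G} (niceV : NiceAI S LV V) (niceZ : NiceAI S LZ Z)
    (U : Set G) (h1 : HFin LV (U ∩ Vᶜ)) (h2 : HFin LV (V ∩ Z)) : HFin LZ (U ∩ Z) := by
  have h2' : HFin LZ (V ∩ Z) :=
    aux_transfer S hS niceV.1 niceV.2.2.1 niceZ.2.1 h2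
  set K1 : Set G := (LV : Set G) * (U ∩ Vᶜ) with hK1def
  have hK1 : HFin LV K1 := aux_hfin_groupmul h1
  set V'' : Set G := V ∪ K1 with hV''def
  have hinvV'' : ∀ h ∈ LV, leftTr h V'' = V'' := by
    intro h hh
    rw [hV''def, aux_leftTr_union, niceV.1 h hh, aux_leftTr_coe_mul hh]
  have hnV'' : ¬ HFin LV V'' := fun hf => niceV.2.2.1 (aux_hfin_mono Set.subset_union_left hf)
  have hbV'' : HFin LV (bdry S V'') :=
    aux_hfin_mono (aux_bdry_union_subset S V K1)
      (aux_hfin_union niceV.2.1 (aux_hfin_bdry_of_hfin S hK1))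
  set K2 : Set G := (LZ : Set G) * (V ∩ Z) with hK2def
  have hK2 : HFin LZ K2 := aux_hfin_groupmul h2'
  set Z0 : Set G := Z ∩ K2ᶜ with hZ0def
  have hbZ0 : HFin LZ (bdry S Z0) := by
    apply aux_hfin_mono (aux_bdry_inter_subset S Z K2ᶜ)
    apply aux_hfin_union niceZ.2.1
    rw [aux_bdry_compl]
    exact aux_hfin_bdry_of_hfin S hK2
  have hVZ0 : HFin LV (V'' ∩ Z0) := by
    apply aux_hfin_mono ?_ hK1
    rintro x ⟨hxV'', hxZ, hxK2⟩
    rcases hxV'' with hxV | hxK1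
    · exfalso
      exact hxK2 ⟨1, SetLike.mem_coe.2 (one_mem LZ), x, ⟨hxV, hxZ⟩, one_mul x⟩
    · exact hxK1
  have ht : HFin LZ (V'' ∩ Z0) := aux_transfer S hS hinvV'' hnV'' hbZ0 hVZ0
  have hsub : U ∩ Z ⊆ (V'' ∩ Z0) ∪ K2 := by
    rintro x ⟨hxU, hxZ⟩
    by_cases hk : x ∈ K2
    · exact Or.inr hk
    · refine Or.inl ⟨?_, hxZ, hk⟩
      by_cases hv : x ∈ V
      · exact Or.inl hv
      · exact Or.inr ⟨1, SetLike.mem_coe.2 (one_mem LV), x, ⟨hxU, hv⟩, one_mul x⟩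
  exact aux_hfin_mono hsub (aux_hfin_union ht hK2)

end AuxStmt6B

/-- If `U ≤ V`, `Z` crosses `U`, and `Z` does not cross `V`, then
`Z ≤ V` or `Z* ≤ V`; if moreover `U < V`, then `Z < V` or `Z* < V`. -/
theorem stmt6 {G : Type*} [Group G] (hGfg : Group.FG G) {n : ℕ}
    (H : Fin n → Subgroup G) (X : Fin n → Set G)
    (hHfg : ∀ i, (H i).FG) (hnt : ∀ i, NontrivialAI (H i) (X i))
    (hgood : GoodPosition H X)
    (U V Z : Set G) (hU : U ∈ Translates X) (hV : V ∈ Translates X) (hZ : Z ∈ Translates X)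
    (hUV : eLE H X U V) (hZU : CrossesE H X U Z) (hZV : ¬ CrossesE H X V Z) :
    (eLE H X Z V ∨ eLE H X Zᶜ V) ∧
    (eLT H X U V → eLT H X Z V ∨ eLT H X Zᶜ V) := by
  classical
  -- a finite generating set for G
  obtain ⟨S0, hclos, hfin⟩ := Group.fg_iff.1 hGfg
  set S : Finset G := hfin.toFinset with hSdef
  have hSgen : Subgroup.closure (S : Set G) = ⊤ := by
    rw [hSdef, Set.Finite.coe_toFinset]; exact hclos
  -- representations
  obtain ⟨gU, iU, horU⟩ := id hU
  have niceU : NiceAI S (conjSub gU (H iU)) U := aux_rep_nice hnt S gU iU horU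
  obtain ⟨gZ, iZ, horZ⟩ := id hZ
  have niceZ : NiceAI S (conjSub gZ (H iZ)) Z := aux_rep_nice hnt S gZ iZ horZ
  have horZc : Zᶜ = leftTr gZ (X iZ) ∨ Zᶜ = (leftTr gZ (X iZ))ᶜ := by
    rcases horZ with h | h
    · exact Or.inr (by rw [h])
    · exact Or.inl (by rw [h, compl_compl])
  have niceZc : NiceAI S (conjSub gZ (H iZ)) Zᶜ := aux_nice_compl niceZ
  have hZc : Zᶜ ∈ Translates X := ⟨gZ, iZ, horZc⟩
  -- U ∩ Vᶜ is small over U in both cases of hUV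
  have hUVsmall : SmallOver H X U (U ∩ Vᶜ) := by
    rcases hUV with he | ⟨hs, _⟩
    · rw [he]; exact ⟨gU, iU, horU, aux_hfinite_iff.2 (aux_hfin_empty _)⟩
    · exact hs
  have smono : ∀ {W W' : Set G}, SmallOver H X U W → W' ⊆ W → SmallOver H X U W' := by
    rintro W W' ⟨g, i, hor, hf⟩ hsub
    exact ⟨g, i, hor, aux_hfinite_iff.2 (aux_hfin_mono hsub (aux_hfinite_iff.1 hf))⟩
  have hne1 : Z ≠ V := by
    intro h; subst h
    exact hZU (true, false) hUVsmall
  have hne2 : Zᶜ ≠ V := by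
    intro h; subst h
    apply hZU (true, true)
    rw [compl_compl] at hUVsmall
    exact hUVsmall
  have main : eLE H X Z V ∨ eLE H X Zᶜ V := by
    by_cases h1 : Vᶜ ∩ Z = ∅
    · exact Or.inl (Or.inl (by rw [Set.inter_comm] at h1; exact h1))
    by_cases h2 : Vᶜ ∩ Zᶜ = ∅
    · exact Or.inr (Or.inl (by rw [Set.inter_comm] at h2; exact h2))
    by_cases h3 : V ∩ Z = ∅
    · exfalso
      apply hZU (true, true)
      apply smono hUVsmall
      rintro x ⟨hxU, hxZ⟩
      refine ⟨hxU, fun hxV => ?_⟩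
      rw [Set.eq_empty_iff_forall_notMem] at h3
      exact h3 x ⟨hxV, hxZ⟩
    by_cases h4 : V ∩ Zᶜ = ∅
    · exfalso
      apply hZU (true, false)
      apply smono hUVsmall
      rintro x ⟨hxU, hxZ⟩
      refine ⟨hxU, fun hxV => ?_⟩
      rw [Set.eq_empty_iff_forall_notMem] at h4
      exact h4 x ⟨hxV, hxZ⟩
    -- Z does not cross V: some corner of (V, Z) is small over V
    have hZVex : ∃ p, SmallOver H X V (corner V Z p) := by
      by_contra hcon; push_neg at hcon
      exact hZV fun p => hcon p
    obtain ⟨⟨a, b⟩, hp⟩ := hZVex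
    obtain ⟨gV, iV, horV, hfinV⟩ := hp
    have niceV : NiceAI S (conjSub gV (H iV)) V := aux_rep_nice hnt S gV iV horV
    have hfinV' : HFin (conjSub gV (H iV)) (corner V Z (a, b)) := aux_hfinite_iff.1 hfinV
    cases a <;> cases b
    -- case (false, false) : Vᶜ ∩ Zᶜ small over V ⟹ Zᶜ ≤ V
    · have ht : HFin (conjSub gZ (H iZ)) (Vᶜ ∩ Zᶜ) :=
        aux_transfer S hSgen (aux_nice_compl niceV).1 (aux_nice_compl niceV).2.2.1
          niceZc.2.1 hfinV'
      have hsm : SmallOver H X Zᶜ (corner Zᶜ V (true, false)) := by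
        refine ⟨gZ, iZ, horZc, aux_hfinite_iff.2 ?_⟩
        show HFin _ (Zᶜ ∩ Vᶜ)
        rw [Set.inter_comm]
        exact ht
      refine Or.inr (Or.inr ⟨hsm, ?_⟩)
      intro q hq hsq
      obtain ⟨r, hr⟩ := hgood Zᶜ hZc V hV q (true, false) hq hsq hsm
      rcases r with ⟨c, d⟩
      cases c <;> cases d
      · rw [show corner Zᶜ V (false, false) = Zᶜᶜ ∩ Vᶜ from rfl, compl_compl,
          Set.inter_comm] at hr
        exact h1 hr
      · rw [show corner Zᶜ V (false, true) = Zᶜᶜ ∩ V from rfl, compl_compl,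
          Set.inter_comm] at hr
        exact h3 hr
      · rw [show corner Zᶜ V (true, false) = Zᶜ ∩ Vᶜ from rfl, Set.inter_comm] at hr
        exact h2 hr
      · rw [show corner Zᶜ V (true, true) = Zᶜ ∩ V from rfl, Set.inter_comm] at hr
        exact h4 hr
    -- case (false, true) : Vᶜ ∩ Z small over V ⟹ Z ≤ V
    · have ht : HFin (conjSub gZ (H iZ)) (Vᶜ ∩ Z) :=
        aux_transfer S hSgen (aux_nice_compl niceV).1 (aux_nice_compl niceV).2.2.1
          niceZ.2.1 hfinV'
      have hsm : SmallOver H X Z (corner Z V (true, false)) := by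
        refine ⟨gZ, iZ, horZ, aux_hfinite_iff.2 ?_⟩
        show HFin _ (Z ∩ Vᶜ)
        rw [Set.inter_comm]
        exact ht
      refine Or.inl (Or.inr ⟨hsm, ?_⟩)
      intro q hq hsq
      obtain ⟨r, hr⟩ := hgood Z hZ V hV q (true, false) hq hsq hsm
      rcases r with ⟨c, d⟩
      cases c <;> cases d
      · rw [show corner Z V (false, false) = Zᶜ ∩ Vᶜ from rfl, Set.inter_comm] at hr
        exact h2 hr
      · rw [show corner Z V (false, true) = Zᶜ ∩ V from rfl, Set.inter_comm] at hr
        exact h4 hr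
      · rw [show corner Z V (true, false) = Z ∩ Vᶜ from rfl, Set.inter_comm] at hr
        exact h1 hr
      · rw [show corner Z V (true, true) = Z ∩ V from rfl, Set.inter_comm] at hr
        exact h3 hr
    -- case (true, false) : V ∩ Zᶜ small over V ⟹ contradiction with Z crossing U
    · exfalso
      obtain ⟨gU', iU', horU', hfinU'⟩ := hUVsmall
      have niceU' : NiceAI S (conjSub gU' (H iU')) U := aux_rep_nice hnt S gU' iU' horU'
      have t1 : HFin (conjSub gV (H iV)) (U ∩ Vᶜ) :=
        aux_transfer S hSgen niceU'.1 niceU'.2.2.1 (aux_nice_compl niceV).2.1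
          (aux_hfinite_iff.1 hfinU')
      have t2 : HFin (conjSub gZ (H iZ)) (U ∩ Zᶜ) :=
        aux_case3 S hSgen niceV niceZc U t1 hfinV'
      have t3 : HFin (conjSub gU (H iU)) (Zᶜ ∩ U) :=
        aux_transfer S hSgen niceZc.1 niceZc.2.2.1 niceU.2.1
          (by rw [Set.inter_comm]; exact t2)
      apply hZU (true, false)
      refine ⟨gU, iU, horU, aux_hfinite_iff.2 ?_⟩
      show HFin _ (U ∩ Zᶜ)
      rw [Set.inter_comm]
      exact t3
    -- case (true, true) : V ∩ Z small over V ⟹ contradiction with Z crossing U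
    · exfalso
      obtain ⟨gU', iU', horU', hfinU'⟩ := hUVsmall
      have niceU' : NiceAI S (conjSub gU' (H iU')) U := aux_rep_nice hnt S gU' iU' horU'
      have t1 : HFin (conjSub gV (H iV)) (U ∩ Vᶜ) :=
        aux_transfer S hSgen niceU'.1 niceU'.2.2.1 (aux_nice_compl niceV).2.1
          (aux_hfinite_iff.1 hfinU')
      have t2 : HFin (conjSub gZ (H iZ)) (U ∩ Z) :=
        aux_case3 S hSgen niceV niceZ U t1 hfinV'
      have t3 : HFin (conjSub gU (H iU)) (Z ∩ U) :=
        aux_transfer S hSgen niceZ.1 niceZ.2.2.1 niceU.2.1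
          (by rw [Set.inter_comm]; exact t2)
      apply hZU (true, true)
      refine ⟨gU, iU, horU, aux_hfinite_iff.2 ?_⟩
      show HFin _ (U ∩ Z)
      rw [Set.inter_comm]
      exact t3
  refine ⟨main, fun _ => ?_⟩
  rcases main with h | h
  · exact Or.inl ⟨h, hne1⟩
  · exact Or.inr ⟨h, hne2⟩
end

section
/- Let G be a finitely generated group, H₁,…,Hₙ finitely generated subgroups, Xᵢ a nontrivial Hᵢ-almost invariant subset of G for each i, with the family in good position. Let A, B and C be distinct cross-connected components of Ē, and suppose that Ū and Ū′ lie in A, V̄ lies in B, and W̄ and W̄′ lie in C. If V̄ is between Ū and W̄, then V̄ is between Ū′ and W̄′. Hence the relation 'B is between A and C' is independent of the chosen representatives. -/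
section SSHelpers

variable {G : Type*} [Group G]

open Set

lemma mem_cosetUnion {H : Subgroup G} {F : Finset G} {z : G} :
    (z ∈ ⋃ g ∈ F, (· * g) '' (H : Set G)) ↔ ∃ f ∈ F, z * f⁻¹ ∈ H := by
  simp only [Set.mem_iUnion, Set.mem_image, SetLike.mem_coe, exists_prop]
  constructor
  · rintro ⟨f, hf, h, hh, rfl⟩
    refine ⟨f, hf, ?_⟩
    simpa [mul_inv_cancel_right] using hh
  · rintro ⟨f, hf, hh⟩
    exact ⟨f, hf, z * f⁻¹, hh, by rw [inv_mul_cancel_right]⟩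

lemma hfinite_mono {H : Subgroup G} {W W' : Set G} (h : HFinite H W) (hsub : W' ⊆ W) :
    HFinite H W' := by
  obtain ⟨F, hF⟩ := h
  exact ⟨F, hsub.trans hF⟩

lemma hfinite_empty {H : Subgroup G} : HFinite H (∅ : Set G) := ⟨∅, by simp⟩

lemma hfinite_union {H : Subgroup G} {P Q : Set G} (hP : HFinite H P) (hQ : HFinite H Q) :
    HFinite H (P ∪ Q) := by
  classical
  obtain ⟨F, hF⟩ := hP
  obtain ⟨F', hF'⟩ := hQ
  refine ⟨F ∪ F', ?_⟩
  intro z hz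
  rcases hz with hz | hz
  · obtain ⟨f, hf, hm⟩ := mem_cosetUnion.1 (hF hz)
    exact mem_cosetUnion.2 ⟨f, Finset.mem_union_left _ hf, hm⟩
  · obtain ⟨f, hf, hm⟩ := mem_cosetUnion.1 (hF' hz)
    exact mem_cosetUnion.2 ⟨f, Finset.mem_union_right _ hf, hm⟩

lemma hfinite_biUnion {H : Subgroup G} (E : Finset G) (S : G → Set G)
    (h : ∀ e ∈ E, HFinite H (S e)) : HFinite H (⋃ e ∈ E, S e) := by
  classical
  induction E using Finset.induction_on with
  | empty => simpa using (hfinite_empty (H := H))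
  | insert _ _ ha ih =>
      rw [Finset.set_biUnion_insert]
      exact hfinite_union (h _ (Finset.mem_insert_self _ _))
        (ih fun e he => h e (Finset.mem_insert_of_mem he))

lemma core2 {Hh K : Subgroup G} {A W : Set G}
    (hai : ∀ g : G, HFinite Hh (symmDiff A ((· * g) '' A)))
    (hWA : W ⊆ A) (hWK : HFinite K W)
    (c : G) (hc : ∀ k ∈ K, k * c ∉ A) : HFinite Hh W := by
  obtain ⟨E, hE⟩ := hWK
  have key : W ⊆ ⋃ e ∈ E, symmDiff A ((· * (c⁻¹ * e)) '' A) := by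
    intro z hz
    obtain ⟨e, he, hk⟩ := mem_cosetUnion.1 (hE hz)
    refine Set.mem_biUnion he (Set.mem_symmDiff.2 (Or.inl ⟨hWA hz, ?_⟩))
    rintro ⟨x, hxA, hxe⟩
    have hxz : x = z * e⁻¹ * c := by rw [← hxe]; group
    exact hc (z * e⁻¹) hk (by rwa [hxz] at hxA)
  exact hfinite_mono (hfinite_biUnion E _ (fun e _ => hai (c⁻¹ * e))) key

end SSHelpers
section SSHelpers2

variable {G : Type*} [Group G]

open Set

lemma mem_leftTr {g z : G} {A : Set G} : z ∈ leftTr g A ↔ g⁻¹ * z ∈ A := by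
  constructor
  · rintro ⟨x, hx, rfl⟩
    simpa [inv_mul_cancel_left] using hx
  · intro h
    exact ⟨g⁻¹ * z, h, by simp⟩

lemma leftTr_one (A : Set G) : leftTr 1 A = A := by
  ext z; simp [mem_leftTr]

lemma rightMul_leftTr (g g' : G) (A : Set G) :
    (· * g') '' leftTr g A = leftTr g ((· * g') '' A) := by
  simp only [leftTr, Set.image_image, mul_assoc]

lemma leftTr_symmDiff (g : G) (A B : Set G) :
    leftTr g (symmDiff A B) = symmDiff (leftTr g A) (leftTr g B) := by
  ext z
  simp [mem_leftTr, Set.mem_symmDiff]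

lemma mem_conjSub {g x : G} {H : Subgroup G} : x ∈ conjSub g H ↔ g⁻¹ * x * g ∈ H := by
  simp only [conjSub, Subgroup.mem_map, MulEquiv.coe_toMonoidHom, MulAut.conj_apply]
  constructor
  · rintro ⟨h, hh, rfl⟩
    have : g⁻¹ * (g * h * g⁻¹) * g = h := by group
    rwa [this]
  · intro h
    exact ⟨g⁻¹ * x * g, h, by group⟩

lemma conjSub_conjSub (g : G) (H : Subgroup G) : conjSub g⁻¹ (conjSub g H) = H := by
  ext x
  rw [mem_conjSub, mem_conjSub]
  constructor
  · intro h
    have : g⁻¹ * (g⁻¹⁻¹ * x * g⁻¹) * g = x := by group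
    rwa [this] at h
  · intro h
    have : g⁻¹ * (g⁻¹⁻¹ * x * g⁻¹) * g = x := by group
    rwa [this]

lemma hfinite_leftTr {H : Subgroup G} {W : Set G} (g : G) (h : HFinite H W) :
    HFinite (conjSub g H) (leftTr g W) := by
  classical
  obtain ⟨F, hF⟩ := h
  refine ⟨F.image (g * ·), ?_⟩
  rintro z ⟨x, hx, rfl⟩
  obtain ⟨f, hf, hxf⟩ := mem_cosetUnion.1 (hF hx)
  refine mem_cosetUnion.2 ⟨g * f, Finset.mem_image_of_mem _ hf, ?_⟩
  rw [mem_conjSub]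
  have : g⁻¹ * (g * x * (g * f)⁻¹) * g = x * f⁻¹ := by group
  rwa [this]

lemma hfinite_of_leftTr {H : Subgroup G} {W : Set G} (g : G)
    (h : HFinite (conjSub g H) (leftTr g W)) : HFinite H W := by
  have h2 := hfinite_leftTr g⁻¹ h
  rwa [leftTr_leftTr, inv_mul_cancel, leftTr_one, conjSub_conjSub] at h2

lemma almostInv_compl {H : Subgroup G} {A : Set G} (h : AlmostInv H A) : AlmostInv H Aᶜ := by
  constructor
  · intro k hk
    rw [leftTr_compl, h.1 k hk]
  · intro g
    have himg : (· * g) '' Aᶜ = ((· * g) '' A)ᶜ :=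
      Set.image_compl_eq (Group.mulRight_bijective g)
    rw [himg, compl_symmDiff_compl]
    exact h.2 g

lemma almostInv_leftTr {H : Subgroup G} {A : Set G} (g : G) (h : AlmostInv H A) :
    AlmostInv (conjSub g H) (leftTr g A) := by
  constructor
  · intro k hk
    rw [mem_conjSub] at hk
    rw [leftTr_leftTr]
    have hkg : k * g = g * (g⁻¹ * k * g) := by group
    rw [hkg, ← leftTr_leftTr, h.1 _ hk]
  · intro g'
    rw [rightMul_leftTr, ← leftTr_symmDiff]
    exact hfinite_leftTr g (h.2 g')

lemma nontrivialAI_compl {H : Subgroup G} {A : Set G} (h : NontrivialAI H A) :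
    NontrivialAI H Aᶜ :=
  ⟨almostInv_compl h.1, h.2.2, by rw [compl_compl]; exact h.2.1⟩

lemma nontrivialAI_leftTr {H : Subgroup G} {A : Set G} (g : G) (h : NontrivialAI H A) :
    NontrivialAI (conjSub g H) (leftTr g A) := by
  refine ⟨almostInv_leftTr g h.1, fun hf => h.2.1 (hfinite_of_leftTr g hf), fun hf => ?_⟩
  rw [← leftTr_compl] at hf
  exact h.2.2 (hfinite_of_leftTr g hf)

end SSHelpers2
section SSHelpers3

variable {G : Type*} [Group G] {ι : Type*} {H : ι → Subgroup G} {X : ι → Set G}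

open Set

/-- `sideB s U` is `U` if `s = true` and `Uᶜ` otherwise. -/
def sideB (s : Bool) (U : Set G) : Set G := cond s U Uᶜ

lemma corner_eq (U V : Set G) (p : Bool × Bool) :
    corner U V p = sideB p.1 U ∩ sideB p.2 V := rfl

lemma sideB_sideB (s t : Bool) (U : Set G) : sideB t (sideB s U) = sideB (s == t) U := by
  cases s <;> cases t <;> simp [sideB]

lemma sideB_compl (s : Bool) (U : Set G) : sideB s Uᶜ = sideB (!s) U := by
  cases s <;> simp [sideB]

lemma compl_sideB (s : Bool) (U : Set G) : (sideB s U)ᶜ = sideB (!s) U := by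
  cases s <;> simp [sideB]

lemma sideB_or (s : Bool) (U : Set G) : sideB s U = U ∨ sideB s U = Uᶜ := by
  cases s
  · exact Or.inr rfl
  · exact Or.inl rfl

lemma nontrivialAI_sideB {K : Subgroup G} {A : Set G} (s : Bool) (h : NontrivialAI K A) :
    NontrivialAI K (sideB s A) := by
  cases s
  · exact nontrivialAI_compl h
  · exact h

/-- `K` is the group attached to some representation of `U` as a translate. -/
def WitGrp (H : ι → Subgroup G) (X : ι → Set G) (U : Set G) (K : Subgroup G) : Prop :=
  ∃ (g : G) (i : ι), (U = leftTr g (X i) ∨ U = (leftTr g (X i))ᶜ) ∧ K = conjSub g (H i)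

lemma witgrp_exists {U : Set G} (hU : U ∈ Translates X) : ∃ K, WitGrp H X U K := by
  obtain ⟨g, i, hor⟩ := hU
  exact ⟨conjSub g (H i), g, i, hor, rfl⟩

lemma witgrp_nt (hnt : ∀ i, NontrivialAI (H i) (X i)) {U : Set G} {K : Subgroup G}
    (h : WitGrp H X U K) : NontrivialAI K U := by
  obtain ⟨g, i, hor, rfl⟩ := h
  rcases hor with rfl | rfl
  · exact nontrivialAI_leftTr g (hnt i)
  · exact nontrivialAI_compl (nontrivialAI_leftTr g (hnt i))

lemma smallOver_iff {U W : Set G} :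
    SmallOver H X U W ↔ ∃ K, WitGrp H X U K ∧ HFinite K W := by
  constructor
  · rintro ⟨g, i, hor, hf⟩
    exact ⟨conjSub g (H i), ⟨g, i, hor, rfl⟩, hf⟩
  · rintro ⟨K, ⟨g, i, hor, rfl⟩, hf⟩
    exact ⟨g, i, hor, hf⟩

lemma smallOver_compl_iff {U W : Set G} :
    SmallOver H X Uᶜ W ↔ SmallOver H X U W := by
  constructor
  · rintro ⟨g, i, hor, hf⟩
    refine ⟨g, i, ?_, hf⟩
    rcases hor with h | h
    · exact Or.inr (by rw [← h, compl_compl])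
    · exact Or.inl (compl_inj_iff.1 h)
  · rintro ⟨g, i, hor, hf⟩
    refine ⟨g, i, ?_, hf⟩
    rcases hor with rfl | rfl
    · exact Or.inr rfl
    · exact Or.inl (compl_compl _)

lemma smallOver_sideB_iff {U W : Set G} (s : Bool) :
    SmallOver H X (sideB s U) W ↔ SmallOver H X U W := by
  cases s
  · exact smallOver_compl_iff
  · exact Iff.rfl

lemma translates_compl {U : Set G} (h : U ∈ Translates X) : Uᶜ ∈ Translates X := by
  obtain ⟨g, i, h | h⟩ := h
  · exact ⟨g, i, Or.inr (by rw [h])⟩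
  · exact ⟨g, i, Or.inl (by rw [h, compl_compl])⟩

/-- Escape coset: if `B` is `K`-invariant and not `K`-finite while `A ∩ B` is `K`-finite,
there is `c` with `Kc ⊆ B` avoiding `A`. -/
lemma escape {K : Subgroup G} {A B : Set G} (hBinv : ∀ k ∈ K, leftTr k B = B)
    (hBnt : ¬ HFinite K B) (hAB : HFinite K (A ∩ B)) :
    ∃ c, ∀ k : G, k ∈ K → k * c ∉ A := by
  obtain ⟨E, hE⟩ := hAB
  have hns : ¬ B ⊆ ⋃ g ∈ E, (· * g) '' (K : Set G) := fun hsub => hBnt ⟨E, hsub⟩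
  obtain ⟨c, hcB, hcn⟩ := Set.not_subset.1 hns
  refine ⟨c, fun k hk hkA => ?_⟩
  have hkB : k * c ∈ B := by
    rw [← hBinv k hk]; exact ⟨c, hcB, rfl⟩
  obtain ⟨f, hf, hmem⟩ := mem_cosetUnion.1 (hE ⟨hkA, hkB⟩)
  refine hcn (mem_cosetUnion.2 ⟨f, hf, ?_⟩)
  have hcf : c * f⁻¹ = k⁻¹ * (k * c * f⁻¹) := by group
  rw [hcf]
  exact K.mul_mem (K.inv_mem hk) hmem

/-- The key transfer lemma (Scott's symmetry argument): a corner set which is small over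
the group of one factor is small over the group of the other factor. -/
lemma transfer_fin {Hh K : Subgroup G} {A B : Set G}
    (hA : ∀ g : G, HFinite Hh (symmDiff A ((· * g) '' A)))
    (hBinv : ∀ k ∈ K, leftTr k B = B) (hBnt : ¬ HFinite K B)
    (hfin : HFinite K (A ∩ B)) : HFinite Hh (A ∩ B) := by
  obtain ⟨c, hc⟩ := escape hBinv hBnt hfin
  exact core2 hA Set.inter_subset_left hfin c hc

lemma transfer_to (hnt : ∀ i, NontrivialAI (H i) (X i)) {U V : Set G} {KA KB : Subgroup G}
    (sA sB : Bool) (hUA : WitGrp H X U KA) (hVB : WitGrp H X V KB)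
    (hfin : HFinite KB (sideB sA U ∩ sideB sB V)) :
    HFinite KA (sideB sA U ∩ sideB sB V) := by
  have ntU := nontrivialAI_sideB sA (witgrp_nt hnt hUA)
  have ntV := nontrivialAI_sideB sB (witgrp_nt hnt hVB)
  exact transfer_fin ntU.1.2 ntV.1.1 ntV.2.1 hfin

lemma to_witness_right (hnt : ∀ i, NontrivialAI (H i) (X i)) {U V : Set G} {KV : Subgroup G}
    (hKV : WitGrp H X V KV) (sU sV : Bool)
    (h : SmallOver H X U (sideB sU U ∩ sideB sV V)) :
    HFinite KV (sideB sU U ∩ sideB sV V) := by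
  obtain ⟨KU, hKU, hfin⟩ := smallOver_iff.1 h
  rw [Set.inter_comm] at hfin ⊢
  exact transfer_to hnt sV sU hKV hKU hfin

lemma to_witness_left (hnt : ∀ i, NontrivialAI (H i) (X i)) {U V : Set G} {KU : Subgroup G}
    (hKU : WitGrp H X U KU) (sU sV : Bool)
    (h : SmallOver H X V (sideB sU U ∩ sideB sV V)) :
    HFinite KU (sideB sU U ∩ sideB sV V) := by
  obtain ⟨KV, hKV, hfin⟩ := smallOver_iff.1 h
  exact transfer_to hnt sU sV hKU hKV hfin

lemma to_witness_left_self (hnt : ∀ i, NontrivialAI (H i) (X i)) {U V : Set G}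
    {KU : Subgroup G} (hVT : V ∈ Translates X) (hKU : WitGrp H X U KU) (sU sV : Bool)
    (h : SmallOver H X U (sideB sU U ∩ sideB sV V)) :
    HFinite KU (sideB sU U ∩ sideB sV V) := by
  obtain ⟨KV, hKV⟩ := witgrp_exists (H := H) hVT
  exact transfer_to hnt sU sV hKU hKV (to_witness_right hnt hKV sU sV h)

lemma smallOver_corner_transfer (hnt : ∀ i, NontrivialAI (H i) (X i)) {U V : Set G}
    (hU : U ∈ Translates X) (sU sV : Bool)
    (h : SmallOver H X V (sideB sU U ∩ sideB sV V)) :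
    SmallOver H X U (sideB sU U ∩ sideB sV V) := by
  obtain ⟨KU, hKU⟩ := witgrp_exists (H := H) hU
  exact smallOver_iff.2 ⟨KU, hKU, to_witness_left hnt hKU sU sV h⟩

lemma crossesE_symm (hnt : ∀ i, NontrivialAI (H i) (X i)) {U V : Set G}
    (hU : U ∈ Translates X) (h : CrossesE H X U V) : CrossesE H X V U := by
  rintro ⟨p1, p2⟩ hp
  have hp' : SmallOver H X V (sideB p2 U ∩ sideB p1 V) := by
    rw [Set.inter_comm]
    exact hp
  exact h (p2, p1) (smallOver_corner_transfer hnt hU p2 p1 hp')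
end SSHelpers3
section SSHelpers4
set_option linter.unusedSectionVars false

variable {G : Type*} [Group G] {ι : Type*} {H : ι → Subgroup G} {X : ι → Set G}

open Set

lemma eLE_left {a' v : Set G} (s : Bool)
    (hsmall : SmallOver H X a' (corner a' v (s, false)))
    (huniq : ∀ p : Bool × Bool, p ≠ (s, false) → ¬ SmallOver H X a' (corner a' v p)) :
    eLE H X (sideB s a') v := by
  right
  constructor
  · exact (smallOver_sideB_iff s).2 hsmall
  · rintro ⟨p1, p2⟩ hp hsp
    have hco : corner (sideB s a') v (p1, p2) = corner a' v (s == p1, p2) := by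
      show sideB p1 (sideB s a') ∩ sideB p2 v = sideB (s == p1) a' ∩ sideB p2 v
      rw [sideB_sideB]
    rw [hco] at hsp
    refine huniq (s == p1, p2) ?_ ((smallOver_sideB_iff s).1 hsp)
    intro h
    apply hp
    have h1 := congrArg Prod.fst h
    have h2 := congrArg Prod.snd h
    simp only at h1 h2
    cases s <;> cases p1 <;> simp_all

lemma eLE_left_empty {a' v : Set G} (s : Bool) (h : corner a' v (s, false) = ∅) :
    eLE H X (sideB s a') v := Or.inl h

lemma eLE_right {v b' : Set G} (t : Bool)
    (hsmall : SmallOver H X v (corner v b' (true, !t)))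
    (huniq : ∀ p : Bool × Bool, p ≠ (true, !t) → ¬ SmallOver H X v (corner v b' p)) :
    eLE H X v (sideB t b') := by
  right
  constructor
  · show SmallOver H X v (v ∩ (sideB t b')ᶜ)
    rw [compl_sideB]
    exact hsmall
  · rintro ⟨p1, p2⟩ hp hsp
    have hco : corner v (sideB t b') (p1, p2) = corner v b' (p1, t == p2) := by
      show sideB p1 v ∩ sideB p2 (sideB t b') = sideB p1 v ∩ sideB (t == p2) b'
      rw [sideB_sideB]
    rw [hco] at hsp
    refine huniq (p1, t == p2) ?_ hsp
    intro h
    apply hp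
    have h1 := congrArg Prod.fst h
    have h2 := congrArg Prod.snd h
    simp only at h1 h2
    cases t <;> cases p2 <;> simp_all

lemma eLE_right_empty {v b' : Set G} (t : Bool) (h : corner v b' (true, !t) = ∅) :
    eLE H X v (sideB t b') := by
  left
  show v ∩ (sideB t b')ᶜ = ∅
  rw [compl_sideB]
  exact h

lemma sideB_ne_left {a' v : Set G} (s : Bool) (h1 : a' ≠ v) (h2 : a' ≠ vᶜ) :
    sideB s a' ≠ v := by
  cases s
  · intro h
    apply h2
    rw [← h]
    simp [sideB]
  · exact h1

lemma ne_sideB_right {v b' : Set G} (t : Bool) (h1 : b' ≠ v) (h2 : b' ≠ vᶜ) :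
    v ≠ sideB t b' := by
  cases t
  · intro h
    apply h2
    rw [h]
    simp [sideB]
  · exact fun h => h1 h.symm

/-- Contradiction: if `a` crosses `a'`, some orientation of `a` is `≤ v`, but a corner
`a'⁽*⁾ ∩ v` is empty or small over `a'`, we get a contradiction. -/
lemma stepA_contra (hnt : ∀ i, NontrivialAI (H i) (X i)) {a a' v : Set G}
    (ha : a ∈ Translates X) (hv : v ∈ Translates X)
    (hcross : CrossesE H X a a') (sa s : Bool)
    (hle : eLE H X (sideB sa a) v)
    (hbad : corner a' v (s, true) = ∅ ∨ SmallOver H X a' (corner a' v (s, true))) : False := by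
  obtain ⟨KV, hKV⟩ := witgrp_exists (H := H) hv
  have ntV := witgrp_nt hnt hKV
  -- Q := sideB sa a ∩ vᶜ is KV-finite
  have hQ : HFinite KV (sideB sa a ∩ sideB false v) := by
    rcases hle with hemp | ⟨hsm, -⟩
    · have : sideB sa a ∩ sideB false v = ∅ := hemp
      rw [this]; exact hfinite_empty
    · exact to_witness_right hnt hKV sa false ((smallOver_sideB_iff sa).1 hsm)
  -- P := sideB s a' ∩ v is KV-finite
  have hP : HFinite KV (sideB s a' ∩ sideB true v) := by
    rcases hbad with hemp | hsm
    · have : sideB s a' ∩ sideB true v = ∅ := hemp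
      rw [this]; exact hfinite_empty
    · exact to_witness_right hnt hKV s true hsm
  -- W := sideB sa a ∩ sideB s a'
  have hWsub : sideB sa a ∩ sideB s a' ⊆
      (sideB s a' ∩ sideB true v) ∪ (sideB sa a ∩ sideB false v) := by
    intro z hz
    by_cases hzv : z ∈ v
    · exact Or.inl ⟨hz.2, hzv⟩
    · exact Or.inr ⟨hz.1, hzv⟩
  have hW : HFinite KV (sideB sa a ∩ sideB s a') :=
    hfinite_mono (hfinite_union hP hQ) hWsub
  -- escape from sideB sa a using B := vᶜ
  have ntVc : NontrivialAI KV vᶜ := nontrivialAI_compl ntV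
  obtain ⟨c, hc⟩ := escape (A := sideB sa a) (B := vᶜ) ntVc.1.1 ntVc.2.1 hQ
  obtain ⟨Ka, hKa⟩ := witgrp_exists (H := H) ha
  have ntA := nontrivialAI_sideB sa (witgrp_nt hnt hKa)
  have hfin : HFinite Ka (sideB sa a ∩ sideB s a') :=
    core2 ntA.1.2 Set.inter_subset_left hW c hc
  exact hcross (sa, s) (smallOver_iff.2 ⟨Ka, hKa, hfin⟩)

/-- Contradiction for the `w`-side. -/
lemma stepW_contra (hnt : ∀ i, NontrivialAI (H i) (X i)) {b b' v : Set G}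
    (hb : b ∈ Translates X) (hb' : b' ∈ Translates X) (hv : v ∈ Translates X)
    (hcross : CrossesE H X b b') (sb s : Bool)
    (hle : eLE H X v (sideB sb b))
    (hbad : corner v b' (false, s) = ∅ ∨ SmallOver H X v (corner v b' (false, s))) : False := by
  obtain ⟨KV, hKV⟩ := witgrp_exists (H := H) hv
  have ntV := witgrp_nt hnt hKV
  -- P := v ∩ sideB (!sb) b is KV-finite
  have hcompl : v ∩ (sideB sb b)ᶜ = v ∩ sideB (!sb) b := by rw [compl_sideB]
  have hP : HFinite KV (sideB true v ∩ sideB (!sb) b) := by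
    show HFinite KV (v ∩ sideB (!sb) b)
    rcases hle with hemp | ⟨hsm, -⟩
    · rw [← hcompl, hemp]; exact hfinite_empty
    · have hsm' : SmallOver H X v (sideB true v ∩ sideB (!sb) b) := by
        show SmallOver H X v (v ∩ sideB (!sb) b)
        rw [← hcompl]; exact hsm
      exact to_witness_left_self hnt hb hKV true (!sb) hsm'
  -- Q := vᶜ ∩ sideB s b' is KV-finite
  have hQ : HFinite KV (sideB false v ∩ sideB s b') := by
    rcases hbad with hemp | hsm
    · have : sideB false v ∩ sideB s b' = ∅ := hemp
      rw [this]; exact hfinite_empty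
    · exact to_witness_left_self hnt hb' hKV false s hsm
  -- W := sideB (!sb) b ∩ sideB s b'
  have hWsub : sideB (!sb) b ∩ sideB s b' ⊆
      (sideB true v ∩ sideB (!sb) b) ∪ (sideB false v ∩ sideB s b') := by
    intro z hz
    by_cases hzv : z ∈ v
    · exact Or.inl ⟨hzv, hz.1⟩
    · exact Or.inr ⟨hzv, hz.2⟩
  have hW : HFinite KV (sideB (!sb) b ∩ sideB s b') :=
    hfinite_mono (hfinite_union hP hQ) hWsub
  -- escape from sideB (!sb) b using B := v
  have hPc : HFinite KV (sideB (!sb) b ∩ v) := by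
    rw [Set.inter_comm]
    exact hP
  obtain ⟨c, hc⟩ := escape (A := sideB (!sb) b) (B := v) ntV.1.1 ntV.2.1 hPc
  obtain ⟨Kb, hKb⟩ := witgrp_exists (H := H) hb
  have ntB := nontrivialAI_sideB (!sb) (witgrp_nt hnt hKb)
  have hfin : HFinite Kb (sideB (!sb) b ∩ sideB s b') :=
    core2 ntB.1.2 Set.inter_subset_left hW c hc
  exact hcross (!sb, s) (smallOver_iff.2 ⟨Kb, hKb, hfin⟩)

end SSHelpers4
section SSHelpers5
set_option linter.unusedSectionVars false

variable {G : Type*} [Group G] {ι : Type*} {H : ι → Subgroup G} {X : ι → Set G}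

open Set

lemma stepA (hnt : ∀ i, NontrivialAI (H i) (X i)) (hgood : GoodPosition H X)
    {a a' v : Set G} (ha : a ∈ Translates X) (ha' : a' ∈ Translates X)
    (hv : v ∈ Translates X)
    (hcross : CrossesE H X a a') (hncross : ¬ CrossesE H X a' v)
    (hne1 : a' ≠ v) (hne2 : a' ≠ vᶜ) (sa : Bool)
    (hlt : eLT H X (sideB sa a) v) : ∃ s : Bool, eLT H X (sideB s a') v := by
  classical
  by_cases hemp : ∃ s : Bool, corner a' v (s, false) = ∅
  · obtain ⟨s, hs⟩ := hemp
    exact ⟨s, eLE_left_empty s hs, sideB_ne_left s hne1 hne2⟩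
  · push_neg at hemp
    by_cases hemp2 : ∃ s : Bool, corner a' v (s, true) = ∅
    · obtain ⟨s, hs⟩ := hemp2
      exact absurd (stepA_contra hnt ha hv hcross sa s hlt.1 (Or.inl hs)) (fun h => h)
    · push_neg at hemp2
      have hnoemp : ∀ p : Bool × Bool, corner a' v p ≠ ∅ := by
        rintro ⟨s, t⟩
        cases t
        · exact Set.nonempty_iff_ne_empty.1 (hemp s)
        · exact Set.nonempty_iff_ne_empty.1 (hemp2 s)
      have hex : ∃ p, SmallOver H X a' (corner a' v p) := by
        by_contra hno
        push_neg at hno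
        exact hncross hno
      obtain ⟨⟨s, t⟩, hp₀⟩ := hex
      have huniq : ∀ p : Bool × Bool, p ≠ (s, t) → ¬ SmallOver H X a' (corner a' v p) := by
        intro p hne hps
        obtain ⟨r, hr⟩ := hgood a' ha' v hv (s, t) p (Ne.symm hne) hp₀ hps
        exact hnoemp r hr
      cases t
      · exact ⟨s, eLE_left s hp₀ huniq, sideB_ne_left s hne1 hne2⟩
      · exact absurd (stepA_contra hnt ha hv hcross sa s hlt.1 (Or.inr hp₀)) (fun h => h)

lemma stepW (hnt : ∀ i, NontrivialAI (H i) (X i)) (hgood : GoodPosition H X)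
    {b b' v : Set G} (hb : b ∈ Translates X) (hb' : b' ∈ Translates X)
    (hv : v ∈ Translates X)
    (hcross : CrossesE H X b b') (hncross : ¬ CrossesE H X v b')
    (hne1 : b' ≠ v) (hne2 : b' ≠ vᶜ) (sb : Bool)
    (hlt : eLT H X v (sideB sb b)) : ∃ s : Bool, eLT H X v (sideB s b') := by
  classical
  by_cases hemp : ∃ t : Bool, corner v b' (true, t) = ∅
  · obtain ⟨t, ht⟩ := hemp
    refine ⟨!t, eLE_right_empty (!t) ?_, ne_sideB_right (!t) hne1 hne2⟩
    rwa [Bool.not_not]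
  · push_neg at hemp
    by_cases hemp2 : ∃ t : Bool, corner v b' (false, t) = ∅
    · obtain ⟨t, ht⟩ := hemp2
      exact absurd (stepW_contra hnt hb hb' hv hcross sb t hlt.1 (Or.inl ht)) (fun h => h)
    · push_neg at hemp2
      have hnoemp : ∀ p : Bool × Bool, corner v b' p ≠ ∅ := by
        rintro ⟨s, t⟩
        cases s
        · exact Set.nonempty_iff_ne_empty.1 (hemp2 t)
        · exact Set.nonempty_iff_ne_empty.1 (hemp t)
      have hex : ∃ p, SmallOver H X v (corner v b' p) := by
        by_contra hno
        push_neg at hno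
        exact hncross hno
      obtain ⟨⟨s, t⟩, hp₀⟩ := hex
      have huniq : ∀ p : Bool × Bool, p ≠ (s, t) → ¬ SmallOver H X v (corner v b' p) := by
        intro p hne hps
        obtain ⟨r, hr⟩ := hgood v hv b' hb' (s, t) p (Ne.symm hne) hp₀ hps
        exact hnoemp r hr
      cases s
      · exact absurd (stepW_contra hnt hb hb' hv hcross sb t hlt.1 (Or.inr hp₀)) (fun h => h)
      · refine ⟨!t, eLE_right (!t) ?_ ?_, ne_sideB_right (!t) hne1 hne2⟩
        · rwa [Bool.not_not]
        · intro p hne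
          refine huniq p ?_
          rwa [Bool.not_not] at hne

end SSHelpers5
/-- Betweenness of cross-connected components is independent of the chosen
representatives: if `A`, `B`, `C` are distinct cross-connected components of `Ē`, with
`Ū, Ū' ∈ A`, `V̄ ∈ B`, `W̄, W̄' ∈ C`, and `Ū V̄ W̄` holds, then `Ū' V̄ W̄'` holds. -/
theorem stmt7 {G : Type*} [Group G] (hGfg : Group.FG G) {n : ℕ}
    (H : Fin n → Subgroup G) (X : Fin n → Set G)
    (hHfg : ∀ i, (H i).FG) (hnt : ∀ i, NontrivialAI (H i) (X i))
    (hgood : GoodPosition H X)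
    (U U' V W W' : Set G)
    (hU : U ∈ Translates X) (hU' : U' ∈ Translates X) (hV : V ∈ Translates X)
    (hW : W ∈ Translates X) (hW' : W' ∈ Translates X)
    (hUU' : SameCCC H X U U') (hWW' : SameCCC H X W W')
    (hAB : ¬ SameCCC H X U V) (hBC : ¬ SameCCC H X V W) (hAC : ¬ SameCCC H X U W)
    (hbetween : BetweenBar H X U V W) :
    BetweenBar H X U' V W' := by
  classical
  obtain ⟨u, v, w, hu_or, hv_or, hw_or, huv, hvw⟩ := hbetween
  have hvT : v ∈ Translates X := by
    rcases hv_or with rfl | rfl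
    · exact hV
    · exact translates_compl hV
  have hvV : SameCCC H X v V := by
    rcases hv_or with rfl | rfl
    · exact Relation.EqvGen.refl _
    · exact Relation.EqvGen.rel _ _ ⟨translates_compl hV, hV, Or.inr (Or.inl rfl)⟩
  have chainA : ∀ x y : Set G, SameCCC H X x y →
      ((x ∈ Translates X ∧ SameCCC H X U x ∧ ∃ s : Bool, eLT H X (sideB s x) v) ↔
       (y ∈ Translates X ∧ SameCCC H X U y ∧ ∃ s : Bool, eLT H X (sideB s y) v)) := by
    intro x y hxy
    induction hxy with
    | rel a b hab =>
        obtain ⟨haT, hbT, hrel⟩ := hab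
        have hab' : SameCCC H X a b := Relation.EqvGen.rel _ _ ⟨haT, hbT, hrel⟩
        constructor
        · rintro ⟨-, hUa, s, hlt⟩
          have hUb : SameCCC H X U b := Relation.EqvGen.trans _ _ _ hUa hab'
          refine ⟨hbT, hUb, ?_⟩
          rcases hrel with rfl | rfl | hcr
          · exact ⟨s, hlt⟩
          · rw [sideB_compl] at hlt
            exact ⟨!s, hlt⟩
          · have hnc : ¬ CrossesE H X b v := fun hcr' =>
              hAB (Relation.EqvGen.trans _ _ _
                (Relation.EqvGen.trans _ _ _ hUb
                  (Relation.EqvGen.rel _ _ ⟨hbT, hvT, Or.inr (Or.inr hcr')⟩)) hvV)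
            have hbv1 : b ≠ v := fun h =>
              hAB (Relation.EqvGen.trans _ _ _
                (Relation.EqvGen.trans _ _ _ hUb
                  (Relation.EqvGen.rel _ _ ⟨hbT, hvT, Or.inl h⟩)) hvV)
            have hbv2 : b ≠ vᶜ := fun h =>
              hAB (Relation.EqvGen.trans _ _ _
                (Relation.EqvGen.trans _ _ _ hUb
                  (Relation.EqvGen.rel _ _ ⟨hbT, hvT, Or.inr (Or.inl h)⟩)) hvV)
            exact stepA hnt hgood haT hbT hvT hcr hnc hbv1 hbv2 s hlt
        · rintro ⟨-, hUb, s, hlt⟩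
          have hUa : SameCCC H X U a :=
            Relation.EqvGen.trans _ _ _ hUb (Relation.EqvGen.symm _ _ hab')
          refine ⟨haT, hUa, ?_⟩
          rcases hrel with rfl | rfl | hcr
          · exact ⟨s, hlt⟩
          · refine ⟨!s, ?_⟩
            rw [sideB_compl, Bool.not_not]
            exact hlt
          · have hcr' : CrossesE H X b a := crossesE_symm hnt haT hcr
            have hnc : ¬ CrossesE H X a v := fun h =>
              hAB (Relation.EqvGen.trans _ _ _
                (Relation.EqvGen.trans _ _ _ hUa
                  (Relation.EqvGen.rel _ _ ⟨haT, hvT, Or.inr (Or.inr h)⟩)) hvV)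
            have hav1 : a ≠ v := fun h =>
              hAB (Relation.EqvGen.trans _ _ _
                (Relation.EqvGen.trans _ _ _ hUa
                  (Relation.EqvGen.rel _ _ ⟨haT, hvT, Or.inl h⟩)) hvV)
            have hav2 : a ≠ vᶜ := fun h =>
              hAB (Relation.EqvGen.trans _ _ _
                (Relation.EqvGen.trans _ _ _ hUa
                  (Relation.EqvGen.rel _ _ ⟨haT, hvT, Or.inr (Or.inl h)⟩)) hvV)
            exact stepA hnt hgood hbT haT hvT hcr' hnc hav1 hav2 s hlt
    | refl x => exact Iff.rfl
    | symm x y h ih => exact ih.symm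
    | trans x y z h1 h2 ih1 ih2 => exact ih1.trans ih2
  have chainC : ∀ x y : Set G, SameCCC H X x y →
      ((x ∈ Translates X ∧ SameCCC H X W x ∧ ∃ s : Bool, eLT H X v (sideB s x)) ↔
       (y ∈ Translates X ∧ SameCCC H X W y ∧ ∃ s : Bool, eLT H X v (sideB s y))) := by
    intro x y hxy
    induction hxy with
    | rel a b hab =>
        obtain ⟨haT, hbT, hrel⟩ := hab
        have hab' : SameCCC H X a b := Relation.EqvGen.rel _ _ ⟨haT, hbT, hrel⟩
        constructor
        · rintro ⟨-, hWa, s, hlt⟩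
          have hWb : SameCCC H X W b := Relation.EqvGen.trans _ _ _ hWa hab'
          refine ⟨hbT, hWb, ?_⟩
          rcases hrel with rfl | rfl | hcr
          · exact ⟨s, hlt⟩
          · rw [sideB_compl] at hlt
            exact ⟨!s, hlt⟩
          · have hnc : ¬ CrossesE H X v b := fun hcr' =>
              hBC (Relation.EqvGen.trans _ _ _ (Relation.EqvGen.symm _ _ hvV)
                (Relation.EqvGen.trans _ _ _
                  (Relation.EqvGen.rel _ _ ⟨hvT, hbT, Or.inr (Or.inr hcr')⟩)
                  (Relation.EqvGen.symm _ _ hWb)))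
            have hbv1 : b ≠ v := fun h =>
              hBC (Relation.EqvGen.trans _ _ _ (Relation.EqvGen.symm _ _ hvV)
                (Relation.EqvGen.trans _ _ _
                  (Relation.EqvGen.rel _ _ ⟨hvT, hbT, Or.inl h.symm⟩)
                  (Relation.EqvGen.symm _ _ hWb)))
            have hbv2 : b ≠ vᶜ := fun h =>
              hBC (Relation.EqvGen.trans _ _ _ (Relation.EqvGen.symm _ _ hvV)
                (Relation.EqvGen.trans _ _ _
                  (Relation.EqvGen.rel _ _
                    ⟨hvT, hbT, Or.inr (Or.inl (by rw [h, compl_compl]))⟩)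
                  (Relation.EqvGen.symm _ _ hWb)))
            exact stepW hnt hgood haT hbT hvT hcr hnc hbv1 hbv2 s hlt
        · rintro ⟨-, hWb, s, hlt⟩
          have hWa : SameCCC H X W a :=
            Relation.EqvGen.trans _ _ _ hWb (Relation.EqvGen.symm _ _ hab')
          refine ⟨haT, hWa, ?_⟩
          rcases hrel with rfl | rfl | hcr
          · exact ⟨s, hlt⟩
          · refine ⟨!s, ?_⟩
            rw [sideB_compl, Bool.not_not]
            exact hlt
          · have hcr' : CrossesE H X b a := crossesE_symm hnt haT hcr
            have hnc : ¬ CrossesE H X v a := fun h =>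
              hBC (Relation.EqvGen.trans _ _ _ (Relation.EqvGen.symm _ _ hvV)
                (Relation.EqvGen.trans _ _ _
                  (Relation.EqvGen.rel _ _ ⟨hvT, haT, Or.inr (Or.inr h)⟩)
                  (Relation.EqvGen.symm _ _ hWa)))
            have hav1 : a ≠ v := fun h =>
              hBC (Relation.EqvGen.trans _ _ _ (Relation.EqvGen.symm _ _ hvV)
                (Relation.EqvGen.trans _ _ _
                  (Relation.EqvGen.rel _ _ ⟨hvT, haT, Or.inl h.symm⟩)
                  (Relation.EqvGen.symm _ _ hWa)))
            have hav2 : a ≠ vᶜ := fun h =>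
              hBC (Relation.EqvGen.trans _ _ _ (Relation.EqvGen.symm _ _ hvV)
                (Relation.EqvGen.trans _ _ _
                  (Relation.EqvGen.rel _ _
                    ⟨hvT, haT, Or.inr (Or.inl (by rw [h, compl_compl]))⟩)
                  (Relation.EqvGen.symm _ _ hWa)))
            exact stepW hnt hgood hbT haT hvT hcr' hnc hav1 hav2 s hlt
    | refl x => exact Iff.rfl
    | symm x y h ih => exact ih.symm
    | trans x y z h1 h2 ih1 ih2 => exact ih1.trans ih2
  have baseA : U ∈ Translates X ∧ SameCCC H X U U ∧ ∃ s : Bool, eLT H X (sideB s U) v := by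
    refine ⟨hU, Relation.EqvGen.refl _, ?_⟩
    rcases hu_or with rfl | rfl
    · exact ⟨true, huv⟩
    · exact ⟨false, huv⟩
  have baseC : W ∈ Translates X ∧ SameCCC H X W W ∧ ∃ s : Bool, eLT H X v (sideB s W) := by
    refine ⟨hW, Relation.EqvGen.refl _, ?_⟩
    rcases hw_or with rfl | rfl
    · exact ⟨true, hvw⟩
    · exact ⟨false, hvw⟩
  obtain ⟨-, -, s', hltU'⟩ := (chainA U U' hUU').1 baseA
  obtain ⟨-, -, t', hltW'⟩ := (chainC W W' hWW').1 baseC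
  exact ⟨sideB s' U', v, sideB t' W', sideB_or s' U', hv_or, sideB_or t' W', hltU', hltW'⟩
end
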